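/- An instance G of the MST problem under explorable uncertainty with predictions and unique T_L = T_U is prediction mandatory free if and only if for every cycle C_i with i ∈ {1,…,l} and every edge e ∈ C_i ∖ {f_i} it holds that ŵ_{f_i} ≥ U_e and ŵ_e ≤ L_{f_i}. Moreover, if G is prediction mandatory free and G' is an instance with unique T_L' = T_U' obtained from G by querying a set of edges, then G' is prediction mandatory free. -/

import Mathlib

/-!
Common framework: the minimum spanning tree problem under explorable
uncertainty with (untrusted) predictions.
-/

open scoped BigOperators
open scoped Classical

noncomputable section

/-- An instance of the MST problem under explorable uncertainty with predictions:
a connected (multi)graph whose edges carry uncertainty intervals (open `(L,U)` for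
non-trivial edges, i.e. `L < U`, and the singleton `{L}` for trivial edges, i.e. `L = U`)
together with predicted values `pw e` lying in the intervals. -/
structure UncGraph where
  V : Type
  E : Type
  fintV : Fintype V
  fintE : Fintype E
  decV : DecidableEq V
  decE : DecidableEq E
  ends : E → Sym2 V
  conn : ∀ u v : V, Relation.ReflTransGen (fun a b => ∃ e : E, ends e = s(a, b)) u v
  L : E → ℝ
  U : E → ℝ
  LU : ∀ e, L e ≤ U e
  pw : E → ℝ
  pw_mem : ∀ e, (L e = U e ∧ pw e = L e) ∨ (L e < pw e ∧ pw e < U e)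

attribute [instance] UncGraph.fintV UncGraph.fintE UncGraph.decV UncGraph.decE

namespace UncGraph

variable (G : UncGraph)

/-- The uncertainty interval of an edge: the open interval `(L e, U e)` for a
non-trivial edge, the singleton `{L e}` for a trivial edge (`L e = U e`). -/
def I (e : G.E) : Set ℝ :=
  {x | (G.L e = G.U e ∧ x = G.L e) ∨ (G.L e < x ∧ x < G.U e)}

/-- A trivial edge: its interval is a singleton. -/
def TrivialEdge (e : G.E) : Prop := G.L e = G.U e

/-- A non-trivial edge: its interval is a nonempty open interval. -/
def NontrivialEdge (e : G.E) : Prop := G.L e < G.U e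

/-- `w` is a valid realization of true edge weights. -/
def Valid (w : G.E → ℝ) : Prop := ∀ e, w e ∈ G.I e

/-- Connectivity of two vertices using only edges from `S`. -/
def ConnectsVia (S : Finset G.E) (u v : G.V) : Prop :=
  Relation.ReflTransGen (fun a b => ∃ e ∈ S, G.ends e = s(a, b)) u v

/-- `S` is a spanning tree: it connects all vertices and has `|V| - 1` edges. -/
def IsSpanningTree (S : Finset G.E) : Prop :=
  (∀ u v : G.V, G.ConnectsVia S u v) ∧ S.card + 1 = Fintype.card G.V

/-- `T` is a minimum spanning tree with respect to the weight function `wf`. -/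
def IsMST (wf : G.E → ℝ) (T : Finset G.E) : Prop :=
  G.IsSpanningTree T ∧ ∀ T', G.IsSpanningTree T' → ∑ e ∈ T, wf e ≤ ∑ e ∈ T', wf e

/-- `wf` agrees with the true values `w` on the queried set `Q` and lies in the
uncertainty intervals elsewhere. -/
def Compatible (w : G.E → ℝ) (Q : Finset G.E) (wf : G.E → ℝ) : Prop :=
  (∀ e ∈ Q, wf e = w e) ∧ ∀ e, wf e ∈ G.I e

/-- The query set `Q` verifies `T`: `T` is an MST for every weight function
compatible with the revealed values. -/
def Verifies (w : G.E → ℝ) (Q T : Finset G.E) : Prop :=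
  ∀ wf, G.Compatible w Q wf → G.IsMST wf T

/-- `Q` is a feasible query set for true values `w`. -/
def Feasible (w : G.E → ℝ) (Q : Finset G.E) : Prop :=
  ∃ T, G.Verifies w Q T

/-- The minimum cardinality of a feasible query set. -/
def optCost (w : G.E → ℝ) : ℕ :=
  sInf {n | ∃ Q, G.Feasible w Q ∧ Q.card = n}

/-- `Q` is an optimal (minimum-cardinality feasible) query set. -/
def IsOptimal (w : G.E → ℝ) (Q : Finset G.E) : Prop :=
  G.Feasible w Q ∧ ∀ Q', G.Feasible w Q' → Q.card ≤ Q'.card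

/-- An edge is mandatory if it belongs to every feasible query set. -/
def Mandatory (w : G.E → ℝ) (e : G.E) : Prop :=
  ∀ Q, G.Feasible w Q → e ∈ Q

/-- A witness set intersects every feasible query set. -/
def IsWitnessSet (w : G.E → ℝ) (W : Finset G.E) : Prop :=
  ∀ Q, G.Feasible w Q → ∃ e ∈ W, e ∈ Q

/-- An edge is prediction mandatory if it is mandatory under the assumption that
all queries return the predicted values. -/
def PredMandatory (e : G.E) : Prop := G.Mandatory G.pw e

/-- An instance is prediction mandatory free if it has no prediction mandatory edge. -/
def PredMandatoryFree : Prop := ∀ e, ¬ G.PredMandatory e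

/-- Hop-distance indicator `k_{e'}(e)`: `0` if the prediction `p e` has the same
relation to the interval `I e'` as the true value `w e` (both `≤ L e'`, both
`≥ U e'`, or both strictly inside), and `1` otherwise. -/
def kErr (p w : G.E → ℝ) (e e' : G.E) : ℕ :=
  if (p e ≤ G.L e' ∧ w e ≤ G.L e') ∨ (G.U e' ≤ p e ∧ G.U e' ≤ w e) ∨
      (G.L e' < p e ∧ p e < G.U e' ∧ G.L e' < w e ∧ w e < G.U e')
  then 0 else 1

/-- `h→(e) = Σ_{e' ≠ e} k_{e'}(e)`. -/
def hright (p w : G.E → ℝ) (e : G.E) : ℕ :=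
  ∑ e' ∈ Finset.univ.erase e, G.kErr p w e e'

/-- `h←(e) = Σ_{e' ≠ e} k_e(e')`. -/
def hleft (p w : G.E → ℝ) (e : G.E) : ℕ :=
  ∑ e' ∈ Finset.univ.erase e, G.kErr p w e' e

/-- `h→(E') = Σ_{e ∈ E'} h→(e)`. -/
def hrightSum (p w : G.E → ℝ) (S : Finset G.E) : ℕ := ∑ e ∈ S, G.hright p w e

/-- `h←(E') = Σ_{e ∈ E'} h←(e)`. -/
def hleftSum (p w : G.E → ℝ) (S : Finset G.E) : ℕ := ∑ e ∈ S, G.hleft p w e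

/-- The hop distance of prediction `p` for realization `w`. -/
def hopDist (p w : G.E → ℝ) : ℕ := ∑ e, G.hright p w e

/-- The hop distance `k_h` of the instance's predictions for realization `w`. -/
def khop (w : G.E → ℝ) : ℕ := G.hopDist G.pw w

/-- Lower-limit weights `w^L`: `L e + ε` for non-trivial edges, the known value
for trivial edges. -/
def lowerWeight (ε : ℝ) (e : G.E) : ℝ := if G.L e = G.U e then G.L e else G.L e + ε

/-- Upper-limit weights `w^U`: `U e - ε` for non-trivial edges, the known value
for trivial edges. -/
def upperWeight (ε : ℝ) (e : G.E) : ℝ := if G.L e = G.U e then G.L e else G.U e - ε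

/-- `T` is a lower limit tree: an MST for `w^L` for all sufficiently small `ε > 0`. -/
def IsLowerLimitTree (T : Finset G.E) : Prop :=
  ∃ ε₀ > (0 : ℝ), ∀ ε : ℝ, 0 < ε → ε < ε₀ → G.IsMST (G.lowerWeight ε) T

/-- `T` is an upper limit tree: an MST for `w^U` for all sufficiently small `ε > 0`. -/
def IsUpperLimitTree (T : Finset G.E) : Prop :=
  ∃ ε₀ > (0 : ℝ), ∀ ε : ℝ, 0 < ε → ε < ε₀ → G.IsMST (G.upperWeight ε) T

/-- `T` is simultaneously the unique lower limit tree and the unique upper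
limit tree (`T_L = T_U`, both unique). -/
def UniqueLimitTrees (T : Finset G.E) : Prop :=
  G.IsLowerLimitTree T ∧ G.IsUpperLimitTree T ∧
  (∀ T', G.IsLowerLimitTree T' → T' = T) ∧
  (∀ T', G.IsUpperLimitTree T' → T' = T)

/-- Number of edge-ends of `S` incident to `v` (loops count twice). -/
def incCount (S : Finset G.E) (v : G.V) : ℕ :=
  ∑ e ∈ S, (if G.ends e = s(v, v) then 2 else if v ∈ G.ends e then 1 else 0)

/-- `S` forms a single cycle: nonempty, every vertex has degree `0` or `2`,
and the support is connected. -/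
def IsCycle (S : Finset G.E) : Prop :=
  S.Nonempty ∧ (∀ v, G.incCount S v = 0 ∨ G.incCount S v = 2) ∧
  ∀ u v, G.incCount S u ≠ 0 → G.incCount S v ≠ 0 → G.ConnectsVia S u v

/-- `C` is the cycle closed by adding the edge `f` to the tree `T`. -/
def IsCycleOf (T : Finset G.E) (f : G.E) (C : Finset G.E) : Prop :=
  G.IsCycle C ∧ f ∈ C ∧ C ⊆ insert f T

/-- `e'` lies in the cut `X_e` between the two components of `T \ {e}`. -/
def InCut (T : Finset G.E) (e e' : G.E) : Prop :=
  ∀ u v : G.V, G.ends e' = s(u, v) → ¬ G.ConnectsVia (T.erase e) u v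

/-- `S` is a path between the (distinct) vertices `a` and `b`. -/
def IsPathBetween (S : Finset G.E) (a b : G.V) : Prop :=
  a ≠ b ∧ G.incCount S a = 1 ∧ G.incCount S b = 1 ∧
  (∀ v, v ≠ a → v ≠ b → G.incCount S v = 0 ∨ G.incCount S v = 2) ∧
  ∀ v, G.incCount S v ≠ 0 → G.ConnectsVia S a v

/-- `{f, l}` is an edge of the vertex cover instance `Ḡ` (w.r.t. the tree `T`):
`f ∉ T`, `l ≠ f` lies on the cycle closed by `f`, both are non-trivial, and
their intervals intersect. -/
def VCEdge (T : Finset G.E) (f l : G.E) : Prop :=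
  f ∉ T ∧ l ≠ f ∧ G.NontrivialEdge f ∧ G.NontrivialEdge l ∧
  (∃ C, G.IsCycleOf T f C ∧ l ∈ C) ∧ (G.I f ∩ G.I l).Nonempty

/-- Adjacency in the vertex cover instance `Ḡ` (symmetrized). -/
def VCAdj (T : Finset G.E) (a b : G.E) : Prop := G.VCEdge T a b ∨ G.VCEdge T b a

/-- `S` is a vertex cover of the vertex cover instance `Ḡ`. -/
def IsVCCover (T S : Finset G.E) : Prop :=
  ∀ a b, G.VCAdj T a b → a ∈ S ∨ b ∈ S

/-- `S` is a minimum vertex cover of the vertex cover instance `Ḡ`. -/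
def IsMinVC (T S : Finset G.E) : Prop :=
  G.IsVCCover T S ∧ ∀ S', G.IsVCCover T S' → S.card ≤ S'.card

/-- Edge `e` does not occur in the instance anymore: independently of the
remaining uncertainty it can be deleted (some MST avoids it, for every
realization) or contracted (some MST contains it, for every realization). -/
def Removable (e : G.E) : Prop :=
  (∀ wf : G.E → ℝ, (∀ e', wf e' ∈ G.I e') → ∃ T, G.IsMST wf T ∧ e ∉ T) ∨
  (∀ wf : G.E → ℝ, (∀ e', wf e' ∈ G.I e') → ∃ T, G.IsMST wf T ∧ e ∈ T)

end UncGraph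

/-- The instance obtained from `G` by querying the edges of `Q` under true
values `w`: the intervals of queried edges collapse to the revealed values. -/
def UncGraph.restrict (G : UncGraph) (w : G.E → ℝ) (Q : Finset G.E) : UncGraph where
  V := G.V
  E := G.E
  fintV := G.fintV
  fintE := G.fintE
  decV := G.decV
  decE := G.decE
  ends := G.ends
  conn := G.conn
  L := fun e => if e ∈ Q then w e else G.L e
  U := fun e => if e ∈ Q then w e else G.U e
  LU := fun e => by by_cases h : e ∈ Q <;> simp [h, G.LU e]
  pw := fun e => if e ∈ Q then w e else G.pw e
  pw_mem := fun e => by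
    by_cases h : e ∈ Q
    · simp [h]
    · simpa [h] using G.pw_mem e

/-- A deterministic adaptive query algorithm: given the instance and the set of
already queried edges together with the revealed values, it either picks the next
edge to query or stops (`none`).  The lawfulness condition states that the
decision may only depend on the revealed values of already queried edges. -/
structure Algorithm where
  next : ∀ G : UncGraph, Finset G.E → (G.E → ℝ) → Option G.E
  lawful : ∀ (G : UncGraph) (Q : Finset G.E) (w w' : G.E → ℝ),
    (∀ e ∈ Q, w e = w' e) → next G Q w = next G Q w'

namespace Algorithm

/-- The set of edges queried by `A` after `n` steps, on instance `G` with true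
values `w`; the algorithm stops as soon as the queried set is feasible. -/
def runQueries (A : Algorithm) (G : UncGraph) (w : G.E → ℝ) : ℕ → Finset G.E
  | 0 => ∅
  | n + 1 =>
    let Q := A.runQueries G w n
    if G.Feasible w Q then Q
    else
      match A.next G Q w with
      | some e => insert e Q
      | none => Q

/-- The final query set of the run of `A`. -/
def finalQueries (A : Algorithm) (G : UncGraph) (w : G.E → ℝ) : Finset G.E :=
  A.runQueries G w (Fintype.card G.E + 1)

/-- The number of queries made by `A` on instance `G` with true values `w`. -/
def algCost (A : Algorithm) (G : UncGraph) (w : G.E → ℝ) : ℕ :=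
  (A.finalQueries G w).card

/-- `A` solves every instance: it always ends with a feasible query set. -/
def Solves (A : Algorithm) : Prop :=
  ∀ (G : UncGraph) (w : G.E → ℝ), G.Valid w → G.Feasible w (A.finalQueries G w)

/-- `A` is `α`-consistent: on instances with correct predictions it makes at
most `α · |OPT|` queries. -/
def Consistent (A : Algorithm) (α : ℝ) : Prop :=
  ∀ G : UncGraph, (A.algCost G G.pw : ℝ) ≤ α * (G.optCost G.pw : ℝ)

/-- `A` is `β`-robust: it makes at most `β · |OPT|` queries on every instance. -/
def Robust (A : Algorithm) (β : ℝ) : Prop :=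
  ∀ (G : UncGraph) (w : G.E → ℝ), G.Valid w → (A.algCost G w : ℝ) ≤ β * (G.optCost w : ℝ)

/-- Run of a preprocessing algorithm: it stops exactly when `next` returns
`none` (rather than when the queried set is feasible). -/
def runPre (A : Algorithm) (G : UncGraph) (w : G.E → ℝ) : ℕ → Finset G.E
  | 0 => ∅
  | n + 1 =>
    let Q := A.runPre G w n
    match A.next G Q w with
    | some e => insert e Q
    | none => Q

/-- The final query set of a preprocessing run of `A`. -/
def preQueries (A : Algorithm) (G : UncGraph) (w : G.E → ℝ) : Finset G.E :=
  A.runPre G w (Fintype.card G.E + 1)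

end Algorithm
/-! ### Auxiliary machinery -/

namespace UncGraph

variable {G : UncGraph}

theorem ends_rep (G : UncGraph) (e : G.E) : ∃ a b, G.ends e = s(a, b) :=
  Sym2.inductionOn (f := fun z => ∃ a b, z = s(a, b)) (G.ends e) (fun x y => ⟨x, y, rfl⟩)

theorem conn_mono {S S' : Finset G.E} (hss : S ⊆ S') {u v : G.V}
    (h : G.ConnectsVia S u v) : G.ConnectsVia S' u v := by
  induction h with
  | refl => exact .refl
  | tail _ hstep ih =>
    obtain ⟨e, he, hee⟩ := hstep
    exact ih.tail ⟨e, hss he, hee⟩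

theorem conn_step {S : Finset G.E} {e : G.E} (he : e ∈ S) {u v : G.V}
    (hee : G.ends e = s(u, v)) : G.ConnectsVia S u v :=
  Relation.ReflTransGen.single ⟨e, he, hee⟩

theorem conn_symm {S : Finset G.E} {u v : G.V} (h : G.ConnectsVia S u v) :
    G.ConnectsVia S v u := by
  induction h with
  | refl => exact .refl
  | tail _ hstep ih =>
    refine Relation.ReflTransGen.trans ?_ ih
    obtain ⟨e, he, hee⟩ := hstep
    exact Relation.ReflTransGen.single ⟨e, he, by rw [hee, Sym2.eq_swap]⟩

theorem conn_empty {u v : G.V} (h : G.ConnectsVia (∅ : Finset G.E) u v) : u = v := by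
  induction h with
  | refl => rfl
  | tail _ hstep ih =>
    obtain ⟨e, he, _⟩ := hstep
    exact absurd he (Finset.notMem_empty e)

theorem walk_cross {S : Finset G.E} {u v : G.V} (h : G.ConnectsVia S u v)
    (P : G.V → Prop) (hu : P u) (hv : ¬ P v) :
    ∃ e ∈ S, ∃ x y, G.ends e = s(x, y) ∧ P x ∧ ¬ P y := by
  induction h with
  | refl => exact absurd hu hv
  | @tail p q hup hstep ih =>
    by_cases hp : P p
    · obtain ⟨e, he, hee⟩ := hstep
      exact ⟨e, he, p, q, hee, hp, hv⟩
    · exact ih hp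

theorem conn_elim_insert {R : Finset G.E} {f : G.E} {u v x y : G.V}
    (hends : G.ends f = s(u, v)) (huv : G.ConnectsVia R u v)
    (h : G.ConnectsVia (insert f R) x y) : G.ConnectsVia R x y := by
  induction h with
  | refl => exact .refl
  | tail _ hstep ih =>
    obtain ⟨e, he, hee⟩ := hstep
    rcases Finset.mem_insert.1 he with rfl | he
    · rw [hends] at hee
      rcases Sym2.eq_iff.1 hee with ⟨rfl, rfl⟩ | ⟨rfl, rfl⟩
      · exact ih.trans huv
      · exact ih.trans (G.conn_symm huv)
    · exact ih.tail ⟨e, he, hee⟩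

/-- Transfer of connectivity: if every edge of `S` has its endpoints connected in `R`,
then `S`-connectivity implies `R`-connectivity. -/
theorem conn_transfer {S R : Finset G.E}
    (hSR : ∀ e ∈ S, ∀ x y, G.ends e = s(x, y) → G.ConnectsVia R x y)
    {u v : G.V} (h : G.ConnectsVia S u v) : G.ConnectsVia R u v := by
  induction h with
  | refl => exact .refl
  | tail _ hstep ih =>
    obtain ⟨e, he, hee⟩ := hstep
    exact ih.trans (hSR e he _ _ hee)

/-! #### Counting: a set connecting all vertices has at least `|V| - 1` edges. -/

/-- The connected component of `v` with respect to the edge set `S`. -/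
noncomputable def cls (G : UncGraph) (S : Finset G.E) (v : G.V) : Finset G.V :=
  Finset.univ.filter (fun u => G.ConnectsVia S v u)

theorem mem_cls {S : Finset G.E} {v u : G.V} : u ∈ G.cls S v ↔ G.ConnectsVia S v u := by
  simp [cls]

theorem cls_eq_of_conn {S : Finset G.E} {v u : G.V} (h : G.ConnectsVia S v u) :
    G.cls S v = G.cls S u := by
  ext z; simp only [mem_cls]
  exact ⟨fun hz => (G.conn_symm h).trans hz, fun hz => h.trans hz⟩

theorem conn_of_cls_eq {S : Finset G.E} {v u : G.V} (h : G.cls S v = G.cls S u) :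
    G.ConnectsVia S v u := by
  have : u ∈ G.cls S v := h ▸ mem_cls.2 Relation.ReflTransGen.refl
  exact mem_cls.1 this

theorem classes_card_le (S : Finset G.E) (f : G.E) :
    (Finset.univ.image (G.cls S)).card ≤ (Finset.univ.image (G.cls (insert f S))).card + 1 := by
  classical
  obtain ⟨a, b, hab⟩ := G.ends_rep f
  have hdec : ∀ u v : G.V, G.ConnectsVia (insert f S) u v →
      G.ConnectsVia S u v ∨ ((G.ConnectsVia S u a ∨ G.ConnectsVia S u b) ∧
        (G.ConnectsVia S a v ∨ G.ConnectsVia S b v)) := by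
    intro u v h
    induction h with
    | refl => exact .inl .refl
    | @tail p q hup hstep ih =>
      obtain ⟨e, he, hee⟩ := hstep
      rcases Finset.mem_insert.1 he with rfl | he
      · rw [hab] at hee
        rcases Sym2.eq_iff.1 hee with ⟨rfl, rfl⟩ | ⟨rfl, rfl⟩
        · rcases ih with h | ⟨h1, _⟩
          · exact .inr ⟨.inl h, .inr .refl⟩
          · exact .inr ⟨h1, .inr .refl⟩
        · rcases ih with h | ⟨h1, _⟩
          · exact .inr ⟨.inr h, .inl .refl⟩
          · exact .inr ⟨h1, .inl .refl⟩
      · rcases ih with h | ⟨h1, h2⟩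
        · exact .inl (h.tail ⟨e, he, hee⟩)
        · exact .inr ⟨h1, h2.imp (fun h' => h'.tail ⟨e, he, hee⟩) (fun h' => h'.tail ⟨e, he, hee⟩)⟩
  set g : Finset G.V → Finset G.V :=
    fun X => Finset.univ.filter (fun z => ∃ y ∈ X, G.ConnectsVia (insert f S) y z) with hg
  have hgc : ∀ v, g (G.cls S v) = G.cls (insert f S) v := by
    intro v; ext z
    simp only [hg, Finset.mem_filter, Finset.mem_univ, true_and, mem_cls]
    constructor
    · rintro ⟨y, h1, h2⟩
      exact (G.conn_mono (Finset.subset_insert _ _) h1).trans h2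
    · intro h
      exact ⟨v, Relation.ReflTransGen.refl, h⟩
  have hcard : ((Finset.univ.image (G.cls S)).erase (G.cls S a)).card ≤
      (Finset.univ.image (G.cls (insert f S))).card := by
    apply Finset.card_le_card_of_injOn g
    · intro X hX
      obtain ⟨x, _, rfl⟩ := Finset.mem_image.1 (Finset.mem_of_mem_erase hX)
      rw [hgc x]
      exact Finset.mem_image.2 ⟨x, Finset.mem_univ x, rfl⟩
    · intro X hX Y hY hXY
      obtain ⟨x, _, rfl⟩ := Finset.mem_image.1 (Finset.mem_of_mem_erase hX)
      obtain ⟨y, _, rfl⟩ := Finset.mem_image.1 (Finset.mem_of_mem_erase hY)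
      have hxa : G.cls S x ≠ G.cls S a := Finset.ne_of_mem_erase hX
      have hya : G.cls S y ≠ G.cls S a := Finset.ne_of_mem_erase hY
      rw [hgc x, hgc y] at hXY
      have hconn' : G.ConnectsVia (insert f S) x y := G.conn_of_cls_eq hXY
      rcases hdec x y hconn' with h | ⟨h1, h2⟩
      · exact G.cls_eq_of_conn h
      · have hxb : G.ConnectsVia S x b := by
          rcases h1 with h1 | h1
          · exact absurd (G.cls_eq_of_conn h1) hxa
          · exact h1
        have hby : G.ConnectsVia S b y := by
          rcases h2 with h2 | h2
          · exact absurd (G.cls_eq_of_conn (G.conn_symm h2)) hya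
          · exact h2
        exact G.cls_eq_of_conn (hxb.trans hby)
  calc (Finset.univ.image (G.cls S)).card
      ≤ ((Finset.univ.image (G.cls S)).erase (G.cls S a)).card + 1 := by
        rcases Finset.decidableMem (G.cls S a) (Finset.univ.image (G.cls S)) with h | h
        · rw [Finset.erase_eq_of_notMem h]; omega
        · rw [Finset.card_erase_of_mem h]; have := Finset.card_pos.2 ⟨_, h⟩; omega
    _ ≤ (Finset.univ.image (G.cls (insert f S))).card + 1 := by omega

theorem card_le_of_connects {S : Finset G.E} (h : ∀ u v : G.V, G.ConnectsVia S u v) :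
    Fintype.card G.V ≤ S.card + 1 := by
  classical
  have main : ∀ S : Finset G.E,
      Fintype.card G.V ≤ S.card + (Finset.univ.image (G.cls S)).card := by
    intro S
    induction S using Finset.induction_on with
    | empty =>
      have himg : Finset.univ.image (G.cls (∅ : Finset G.E)) =
          Finset.univ.image (fun v : G.V => ({v} : Finset G.V)) := by
        apply Finset.image_congr
        intro v _
        ext z
        simp only [mem_cls, Finset.mem_singleton]
        exact ⟨fun h' => (G.conn_empty h').symm, fun h' => h' ▸ Relation.ReflTransGen.refl⟩
      rw [himg, Finset.card_image_of_injective _ (fun x y hxy => by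
        simpa using (Finset.singleton_inj.1 hxy))]
      simp
    | @insert f S hfS ih =>
      have := G.classes_card_le S f
      rw [Finset.card_insert_of_notMem hfS]
      omega
  have h1 := main S
  rcases isEmpty_or_nonempty G.V with hV | hV
  · simp [Fintype.card_eq_zero]
  · obtain ⟨v₀⟩ := hV
    have himg : Finset.univ.image (G.cls S) = {G.cls S v₀} := by
      apply Finset.eq_singleton_iff_nonempty_unique_mem.2
      refine ⟨⟨_, Finset.mem_image.2 ⟨v₀, Finset.mem_univ _, rfl⟩⟩, ?_⟩
      intro X hX
      obtain ⟨x, _, rfl⟩ := Finset.mem_image.1 hX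
      exact (G.cls_eq_of_conn (h v₀ x)).symm
    rw [himg] at h1
    simpa using h1

/-! #### Spanning tree basics -/

theorem spanning_erase_not_conn {T : Finset G.E} (hT : G.IsSpanningTree T) {e : G.E}
    (he : e ∈ T) {a b : G.V} (hends : G.ends e = s(a, b)) :
    ¬ G.ConnectsVia (T.erase e) a b := by
  intro hconn
  have hsub : T ⊆ insert e (T.erase e) := by
    intro z hz
    by_cases hze : z = e
    · exact hze ▸ Finset.mem_insert_self _ _
    · exact Finset.mem_insert_of_mem (Finset.mem_erase.2 ⟨hze, hz⟩)
  have hall : ∀ u v, G.ConnectsVia (T.erase e) u v := fun u v =>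
    G.conn_elim_insert hends hconn (G.conn_mono hsub (hT.1 u v))
  have hcard := G.card_le_of_connects hall
  rw [Finset.card_erase_of_mem he] at hcard
  have h1 : 1 ≤ T.card := Finset.card_pos.2 ⟨e, he⟩
  have h2 := hT.2
  omega

theorem spanning_no_loop {T : Finset G.E} (hT : G.IsSpanningTree T) {e : G.E}
    (he : e ∈ T) {a b : G.V} (hends : G.ends e = s(a, b)) : a ≠ b := by
  rintro rfl
  exact G.spanning_erase_not_conn hT he hends Relation.ReflTransGen.refl

theorem side_invariant {T : Finset G.E} (hT : G.IsSpanningTree T) {e : G.E}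
    (he : e ∈ T) {a b : G.V} (hends : G.ends e = s(a, b)) (u : G.V) :
    G.ConnectsVia (T.erase e) a u ∨ G.ConnectsVia (T.erase e) b u := by
  have h := hT.1 a u
  clear he
  induction h with
  | refl => exact .inl .refl
  | @tail p q hp hstep ih =>
    obtain ⟨g, hg, hge⟩ := hstep
    by_cases hgE : g = e
    · subst hgE
      rw [hends] at hge
      rcases Sym2.eq_iff.1 hge with ⟨rfl, rfl⟩ | ⟨rfl, rfl⟩
      · exact .inr .refl
      · exact .inl .refl
    · have hg' : g ∈ T.erase e := Finset.mem_erase.2 ⟨hgE, hg⟩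
      rcases ih with h | h
      · exact .inl (h.tail ⟨g, hg', hge⟩)
      · exact .inr (h.tail ⟨g, hg', hge⟩)

theorem swap_spanning {T : Finset G.E} (hT : G.IsSpanningTree T) {e h : G.E}
    (he : e ∈ T) {a b x y : G.V} (hends : G.ends e = s(a, b)) (hhe : G.ends h = s(x, y))
    (hsep : ¬ G.ConnectsVia (T.erase e) x y) :
    G.IsSpanningTree (insert h (T.erase e)) := by
  have hhT : h ∉ T.erase e := fun hmem => hsep (G.conn_step hmem hhe)
  have hxa := G.side_invariant hT he hends x
  have hyb := G.side_invariant hT he hends y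
  have hsub : T.erase e ⊆ insert h (T.erase e) := Finset.subset_insert _ _
  have hstep : G.ConnectsVia (insert h (T.erase e)) x y :=
    G.conn_step (Finset.mem_insert_self _ _) hhe
  have hab : G.ConnectsVia (insert h (T.erase e)) a b := by
    rcases hxa with h1 | h1 <;> rcases hyb with h2 | h2
    · exact absurd ((G.conn_symm h1).trans h2) hsep
    · exact ((G.conn_mono hsub h1).trans hstep).trans (G.conn_symm (G.conn_mono hsub h2))
    · exact ((G.conn_mono hsub h2).trans (G.conn_symm hstep)).trans
        (G.conn_symm (G.conn_mono hsub h1))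
    · exact absurd ((G.conn_symm h1).trans h2) hsep
  constructor
  · intro u v
    have hsub2 : T ⊆ insert e (insert h (T.erase e)) := by
      intro z hz
      by_cases hze : z = e
      · exact hze ▸ Finset.mem_insert_self _ _
      · exact Finset.mem_insert_of_mem (Finset.mem_insert_of_mem (Finset.mem_erase.2 ⟨hze, hz⟩))
    exact G.conn_elim_insert hends hab (G.conn_mono hsub2 (hT.1 u v))
  · rw [Finset.card_insert_of_notMem hhT, Finset.card_erase_of_mem he]
    have h1 : 1 ≤ T.card := Finset.card_pos.2 ⟨e, he⟩
    have h2 := hT.2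
    omega

theorem spanning_eq_of_subset {T T' : Finset G.E} (hT : G.IsSpanningTree T)
    (hT' : G.IsSpanningTree T') (hss : T' ⊆ T) : T' = T := by
  apply Finset.eq_of_subset_of_card_le hss
  have := hT.2; have := hT'.2; omega

theorem sum_swap (wf : G.E → ℝ) {T : Finset G.E} {e h : G.E} (he : e ∈ T) (hh : h ∉ T) :
    ∑ x ∈ insert h (T.erase e), wf x = ∑ x ∈ T, wf x - wf e + wf h := by
  rw [Finset.sum_insert (fun hmem => hh (Finset.mem_of_mem_erase hmem)),
    Finset.sum_erase_eq_sub he]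
  ring

theorem mst_swap_le {wf : G.E → ℝ} {T₀ : Finset G.E} (hM : G.IsMST wf T₀) {e h : G.E}
    (he : e ∈ T₀) (hh : h ∉ T₀)
    (hsp : G.IsSpanningTree (insert h (T₀.erase e))) : wf e ≤ wf h := by
  have hle := hM.2 _ hsp
  rw [G.sum_swap wf he hh] at hle
  linarith

end UncGraph
namespace UncGraph

variable {G : UncGraph}

/-! #### Incidence counting -/

/-- Contribution of a single edge to the degree of `v`. -/
def contrib (G : UncGraph) (e : G.E) (v : G.V) : ℕ :=
  if G.ends e = s(v, v) then 2 else if v ∈ G.ends e then 1 else 0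

theorem incCount_eq (S : Finset G.E) (v : G.V) :
    G.incCount S v = ∑ e ∈ S, G.contrib e v := rfl

theorem contrib_of_ne {e : G.E} {a b : G.V} (hends : G.ends e = s(a, b)) (hab : a ≠ b)
    (v : G.V) : G.contrib e v = if v = a ∨ v = b then 1 else 0 := by
  unfold contrib
  rw [hends]
  rw [if_neg (by rw [Sym2.eq_iff]; rintro (⟨rfl, rfl⟩ | ⟨rfl, rfl⟩) <;> exact hab rfl)]
  simp [Sym2.mem_iff, eq_comm]

theorem contrib_loop {e : G.E} {a : G.V} (hends : G.ends e = s(a, a)) (v : G.V) :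
    G.contrib e v = if v = a then 2 else 0 := by
  unfold contrib
  rw [hends]
  by_cases hv : v = a
  · subst hv; simp
  · rw [if_neg (by rw [Sym2.eq_iff]; rintro (⟨rfl, -⟩ | ⟨rfl, -⟩) <;> exact hv rfl),
      if_neg (by rw [Sym2.mem_iff]; rintro (rfl | rfl) <;> exact hv rfl), if_neg hv]

theorem incCount_insert {P : Finset G.E} {f : G.E} (hf : f ∉ P) (v : G.V) :
    G.incCount (insert f P) v = G.contrib f v + G.incCount P v := by
  rw [incCount_eq, incCount_eq, Finset.sum_insert hf]

theorem incCount_erase_add {C : Finset G.E} {e : G.E} (he : e ∈ C) (v : G.V) :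
    G.incCount C v = G.contrib e v + G.incCount (C.erase e) v := by
  rw [incCount_eq, incCount_eq, ← Finset.add_sum_erase _ _ he]

theorem exists_incident {P : Finset G.E} {v : G.V} (h : G.incCount P v ≠ 0) :
    ∃ e ∈ P, v ∈ G.ends e := by
  rw [incCount_eq] at h
  obtain ⟨e, he, hc⟩ := Finset.exists_ne_zero_of_sum_ne_zero h
  refine ⟨e, he, ?_⟩
  unfold contrib at hc
  split_ifs at hc with h1 h2
  · rw [h1, Sym2.mem_iff]; exact Or.inl rfl
  · exact h2
  · exact absurd rfl hc

theorem incCount_singleton (e : G.E) (v : G.V) :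
    G.incCount ({e} : Finset G.E) v = G.contrib e v := by
  rw [incCount_eq, Finset.sum_singleton]

/-! #### Cycles minus an edge connect the endpoints -/

theorem cycle_erase_conn {C : Finset G.E} (hC : G.IsCycle C) {e : G.E} (he : e ∈ C)
    {a b : G.V} (hends : G.ends e = s(a, b)) : G.ConnectsVia (C.erase e) a b := by
  by_cases hab : a = b
  · exact hab ▸ Relation.ReflTransGen.refl
  by_contra hconn
  classical
  set K := Finset.univ.filter (fun v => G.ConnectsVia (C.erase e) a v) with hK
  have haK : a ∈ K := by
    simp only [hK, Finset.mem_filter, Finset.mem_univ, true_and]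
    exact Relation.ReflTransGen.refl
  have hbK : b ∉ K := by
    simp only [hK, Finset.mem_filter, Finset.mem_univ, true_and]
    exact hconn
  have hclosed : ∀ g ∈ C.erase e, ∀ x y, G.ends g = s(x, y) → (x ∈ K ↔ y ∈ K) := by
    intro g hg x y hxy
    simp only [hK, Finset.mem_filter, Finset.mem_univ, true_and]
    exact ⟨fun h => h.tail ⟨g, hg, hxy⟩,
      fun h => h.tail ⟨g, hg, by rw [hxy, Sym2.eq_swap]⟩⟩
  have heven : 2 ∣ ∑ v ∈ K, G.incCount (C.erase e) v := by
    have hcomm : ∑ v ∈ K, G.incCount (C.erase e) v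
        = ∑ g ∈ C.erase e, ∑ v ∈ K, G.contrib g v := by
      simp only [incCount_eq]
      rw [Finset.sum_comm]
    rw [hcomm]
    apply Finset.dvd_sum
    intro g hg
    obtain ⟨x, y, hxy⟩ := G.ends_rep g
    by_cases hxyeq : x = y
    · subst hxyeq
      have : ∀ v, G.contrib g v = if v = x then 2 else 0 := G.contrib_loop hxy
      rw [Finset.sum_congr rfl (fun v _ => this v), Finset.sum_ite_eq' K x (fun _ => 2)]
      split_ifs <;> simp
    · have hcv : ∀ v, G.contrib g v = (if v = x then 1 else 0) + (if v = y then 1 else 0) := by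
        intro v
        rw [G.contrib_of_ne hxy hxyeq]
        by_cases h1 : v = x
        · subst h1; simp [hxyeq]
        · by_cases h2 : v = y
          · subst h2; simp [h1]
          · simp [h1, h2]
      rw [Finset.sum_congr rfl (fun v _ => hcv v), Finset.sum_add_distrib,
        Finset.sum_ite_eq' K x (fun _ => 1), Finset.sum_ite_eq' K y (fun _ => 1)]
      have := hclosed g hg x y hxy
      by_cases hx : x ∈ K
      · rw [if_pos hx, if_pos (this.1 hx)]
        try omega
      · rw [if_neg hx, if_neg (fun hy => hx (this.2 hy))]
        try omega
  have hsplit : ∑ v ∈ K, G.incCount C v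
      = ∑ v ∈ K, G.contrib e v + ∑ v ∈ K, G.incCount (C.erase e) v := by
    rw [← Finset.sum_add_distrib]
    exact Finset.sum_congr rfl (fun v _ => G.incCount_erase_add he v)
  have hce : ∑ v ∈ K, G.contrib e v = 1 := by
    have : ∀ v, G.contrib e v = (if v = a then 1 else 0) + (if v = b then 1 else 0) := by
      intro v
      rw [G.contrib_of_ne hends hab]
      by_cases h1 : v = a
      · subst h1; simp [hab]
      · by_cases h2 : v = b
        · subst h2; simp [h1]
        · simp [h1, h2]
    rw [Finset.sum_congr rfl (fun v _ => this v), Finset.sum_add_distrib,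
      Finset.sum_ite_eq' K a (fun _ => 1), Finset.sum_ite_eq' K b (fun _ => 1),
      if_pos haK, if_neg hbK]
    omega
  have hCeven : 2 ∣ ∑ v ∈ K, G.incCount C v := by
    apply Finset.dvd_sum
    intro v _
    rcases hC.2.1 v with h | h <;> simp [h]
  obtain ⟨k1, hk1⟩ := heven
  obtain ⟨k2, hk2⟩ := hCeven
  omega

end UncGraph
namespace UncGraph

variable {G : UncGraph}

/-! #### Paths -/

/-- The simple graph induced by an edge set. -/
def sgraph (G : UncGraph) (S : Finset G.E) : SimpleGraph G.V where
  Adj u v := u ≠ v ∧ ∃ e ∈ S, G.ends e = s(u, v)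
  symm := by
    constructor
    rintro u v ⟨huv, e, he, hee⟩
    exact ⟨huv.symm, e, he, by rw [hee, Sym2.eq_swap]⟩
  loopless := by constructor; rintro u ⟨h, -⟩; exact h rfl

/-- A good path from `a` to `b` inside the edge set `T`. -/
def GoodPath (G : UncGraph) (T P : Finset G.E) (a b : G.V) : Prop :=
  P ⊆ T ∧ G.ConnectsVia P a b ∧
  (∀ h ∈ P, ∀ x y, G.ends h = s(x, y) →
    (G.ConnectsVia (P.erase h) a x ∧ G.ConnectsVia (P.erase h) y b) ∨
    (G.ConnectsVia (P.erase h) a y ∧ G.ConnectsVia (P.erase h) x b)) ∧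
  G.incCount P a = 1 ∧ G.incCount P b = 1 ∧
  (∀ v, v ≠ a → v ≠ b → G.incCount P v = 0 ∨ G.incCount P v = 2) ∧
  (∀ v, G.incCount P v ≠ 0 → G.ConnectsVia P a v)

theorem mem_ends_of_contrib_ne_zero {e : G.E} {z : G.V} (h : G.contrib e z ≠ 0) :
    z ∈ G.ends e := by
  unfold contrib at h
  split_ifs at h with h1 h2
  · rw [h1, Sym2.mem_iff]; exact Or.inl rfl
  · exact h2
  · exact absurd rfl h

theorem no_incident_of_not_support {P : Finset G.E} {u : G.V}
    (h : ∀ h' ∈ P, ∀ x, x ∈ G.ends h' → x ≠ u) : G.incCount P u = 0 := by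
  by_contra hne
  obtain ⟨e, he, hx⟩ := G.exists_incident hne
  exact h e he u hx rfl

theorem walk_goodpath {S : Finset G.E} {u v : G.V} (w : (G.sgraph S).Walk u v)
    (hpath : w.IsPath) (huv : u ≠ v) :
    ∃ P : Finset G.E, G.GoodPath S P u v ∧ ∀ h ∈ P, ∀ x, x ∈ G.ends h → x ∈ w.support := by
  induction w with
  | nil => exact absurd rfl huv
  | @cons u p v hadj w ih =>
    obtain ⟨e₀, he₀S, he₀⟩ := hadj.2
    have hup : u ≠ p := hadj.1
    have hpath' := (SimpleGraph.Walk.cons_isPath_iff _ _).1 hpath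
    have hue : u ∈ G.ends e₀ := by rw [he₀, Sym2.mem_iff]; exact Or.inl rfl
    have hpe : p ∈ G.ends e₀ := by rw [he₀, Sym2.mem_iff]; exact Or.inr rfl
    by_cases hpv : p = v
    · subst hpv
      refine ⟨{e₀}, ⟨Finset.singleton_subset_iff.2 he₀S, G.conn_step (Finset.mem_singleton_self e₀) he₀,
        ?_, ?_, ?_, ?_, ?_⟩, ?_⟩
      · intro h hh x y hxy
        rw [Finset.mem_singleton] at hh
        subst hh
        rw [Finset.erase_singleton]
        rw [he₀] at hxy
        rcases Sym2.eq_iff.1 hxy.symm with ⟨rfl, rfl⟩ | ⟨rfl, rfl⟩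
        · exact Or.inl ⟨Relation.ReflTransGen.refl, Relation.ReflTransGen.refl⟩
        · exact Or.inr ⟨Relation.ReflTransGen.refl, Relation.ReflTransGen.refl⟩
      · rw [incCount_singleton, G.contrib_of_ne he₀ hup]; simp
      · rw [incCount_singleton, G.contrib_of_ne he₀ hup]; simp [Ne.symm hup]
      · intro z hzu hzp
        left
        rw [incCount_singleton, G.contrib_of_ne he₀ hup]
        simp [hzu, hzp]
      · intro z hz
        rw [incCount_singleton] at hz
        have : z ∈ G.ends e₀ := G.mem_ends_of_contrib_ne_zero hz
        rw [he₀, Sym2.mem_iff] at this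
        rcases this with rfl | rfl
        · exact Relation.ReflTransGen.refl
        · exact G.conn_step (Finset.mem_singleton_self e₀) he₀
      · intro h hh x hx
        rw [Finset.mem_singleton] at hh
        subst hh
        rw [he₀, Sym2.mem_iff] at hx
        rcases hx with rfl | rfl
        · exact SimpleGraph.Walk.start_mem_support _
        · rw [SimpleGraph.Walk.support_cons]
          exact List.mem_cons_of_mem _ (SimpleGraph.Walk.end_mem_support _)
    · obtain ⟨P', hP', hsupp⟩ := ih hpath'.1 hpv
      obtain ⟨hsub', hconn', hsplit', hinca', hincb', hint', hconnv'⟩ := hP'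
      have husupp : ∀ h ∈ P', ∀ x, x ∈ G.ends h → x ≠ u := by
        intro h hh x hx hxu
        exact hpath'.2 (hxu ▸ hsupp h hh x hx)
      have he₀P' : e₀ ∉ P' := fun h => husupp e₀ h u hue rfl
      have hincu : G.incCount P' u = 0 := G.no_incident_of_not_support husupp
      have hins : ∀ z, G.incCount (insert e₀ P') z = G.contrib e₀ z + G.incCount P' z :=
        G.incCount_insert he₀P'
      have hce : ∀ z, G.contrib e₀ z = if z = u ∨ z = p then 1 else 0 :=
        G.contrib_of_ne he₀ hup
      have hsubi : P' ⊆ insert e₀ P' := Finset.subset_insert _ _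
      have hstep0 : G.ConnectsVia (insert e₀ P') u p :=
        G.conn_step (Finset.mem_insert_self _ _) he₀
      refine ⟨insert e₀ P', ⟨Finset.insert_subset he₀S hsub', hstep0.trans (G.conn_mono hsubi hconn'),
        ?_, ?_, ?_, ?_, ?_⟩, ?_⟩
      · intro h hh x y hxy
        rcases Finset.mem_insert.1 hh with rfl | hh
        · rw [Finset.erase_insert he₀P']
          rw [he₀] at hxy
          rcases Sym2.eq_iff.1 hxy.symm with ⟨rfl, rfl⟩ | ⟨rfl, rfl⟩
          · exact Or.inl ⟨Relation.ReflTransGen.refl, hconn'⟩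
          · exact Or.inr ⟨Relation.ReflTransGen.refl, hconn'⟩
        · have hne : e₀ ≠ h := fun hEq => he₀P' (hEq ▸ hh)
          rw [Finset.erase_insert_of_ne hne]
          have hsubi2 : P'.erase h ⊆ insert e₀ (P'.erase h) := Finset.subset_insert _ _
          have hstep2 : G.ConnectsVia (insert e₀ (P'.erase h)) u p :=
            G.conn_step (Finset.mem_insert_self _ _) he₀
          rcases hsplit' h hh x y hxy with ⟨h1, h2⟩ | ⟨h1, h2⟩
          · exact Or.inl ⟨hstep2.trans (G.conn_mono hsubi2 h1), G.conn_mono hsubi2 h2⟩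
          · exact Or.inr ⟨hstep2.trans (G.conn_mono hsubi2 h1), G.conn_mono hsubi2 h2⟩
      · rw [hins, hce, hincu]; simp
      · rw [hins, hce, hincb']
        have : ¬ (v = u ∨ v = p) := by rintro (rfl | rfl); exacts [huv rfl, hpv rfl]
        simp [this]
      · intro z hzu hzv
        rw [hins, hce]
        by_cases hzp : z = p
        · subst hzp
          rw [hinca']
          simp
        · rcases hint' z hzp hzv with h | h <;> rw [h] <;> simp [hzu, hzp]
      · intro z hz
        rw [hins] at hz
        by_cases hz' : G.incCount P' z = 0
        · rw [hz'] at hz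
          have : z ∈ G.ends e₀ := G.mem_ends_of_contrib_ne_zero (by simpa using hz)
          rw [he₀, Sym2.mem_iff] at this
          rcases this with rfl | rfl
          · exact Relation.ReflTransGen.refl
          · exact hstep0
        · exact hstep0.trans (G.conn_mono hsubi (hconnv' z hz'))
      · intro h hh x hx
        rw [SimpleGraph.Walk.support_cons]
        rcases Finset.mem_insert.1 hh with rfl | hh
        · rw [he₀, Sym2.mem_iff] at hx
          rcases hx with rfl | rfl
          · exact List.mem_cons_self
          · exact List.mem_cons_of_mem _ (SimpleGraph.Walk.start_mem_support _)
        · exact List.mem_cons_of_mem _ (hsupp h hh x hx)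

theorem pathex {S : Finset G.E} {u v : G.V} (h : G.ConnectsVia S u v) (huv : u ≠ v) :
    ∃ P, G.GoodPath S P u v := by
  have hreach : (G.sgraph S).Reachable u v := by
    clear huv
    induction h with
    | refl => exact SimpleGraph.Reachable.refl u
    | @tail p q hp hstep ih =>
      obtain ⟨e, he, hee⟩ := hstep
      by_cases hpq : p = q
      · exact hpq ▸ ih
      · exact ih.trans (SimpleGraph.Adj.reachable ⟨hpq, e, he, hee⟩)
  obtain ⟨w⟩ := hreach
  obtain ⟨P, hP, -⟩ := G.walk_goodpath w.toPath.1 w.toPath.2 huv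
  exact ⟨P, hP⟩

theorem path_dual {T P : Finset G.E} (hT : G.IsSpanningTree T) {a b : G.V}
    (hP : G.GoodPath T P a b) {h : G.E} (hh : h ∈ P) :
    ¬ G.ConnectsVia (T.erase h) a b := by
  intro hconn
  obtain ⟨x, y, hxy⟩ := G.ends_rep h
  have hsubs : P.erase h ⊆ T.erase h := Finset.erase_subset_erase h hP.1
  rcases hP.2.2.1 h hh x y hxy with ⟨h1, h2⟩ | ⟨h1, h2⟩
  · exact G.spanning_erase_not_conn hT (hP.1 hh) hxy
      (((G.conn_symm (G.conn_mono hsubs h1)).trans hconn).trans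
        (G.conn_symm (G.conn_mono hsubs h2)))
  · refine G.spanning_erase_not_conn hT (hP.1 hh) (by rw [hxy, Sym2.eq_swap])
      (((G.conn_symm (G.conn_mono hsubs h1)).trans hconn).trans
        (G.conn_symm (G.conn_mono hsubs h2)))

theorem goodpath_cycle {T P : Finset G.E} {a b : G.V} (hP : G.GoodPath T P a b)
    {f : G.E} (hf : f ∉ T) (hends : G.ends f = s(a, b)) (hab : a ≠ b) :
    G.IsCycleOf T f (insert f P) := by
  have hfP : f ∉ P := fun h => hf (hP.1 h)
  obtain ⟨hsub, hconn, hsplit, hinca, hincb, hint, hconnv⟩ := hP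
  have hins : ∀ z, G.incCount (insert f P) z = G.contrib f z + G.incCount P z :=
    G.incCount_insert hfP
  have hce : ∀ z, G.contrib f z = if z = a ∨ z = b then 1 else 0 :=
    G.contrib_of_ne hends hab
  have hconn_a : ∀ z, G.incCount (insert f P) z ≠ 0 → G.ConnectsVia (insert f P) a z := by
    intro z hz
    rw [hins] at hz
    by_cases hz' : G.incCount P z = 0
    · rw [hz', hce] at hz
      by_cases hza : z = a
      · exact hza ▸ Relation.ReflTransGen.refl
      · by_cases hzb : z = b
        · exact hzb ▸ G.conn_step (Finset.mem_insert_self _ _) hends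
        · simp [hza, hzb] at hz
    · exact G.conn_mono (Finset.subset_insert _ _) (hconnv z hz')
  refine ⟨⟨⟨f, Finset.mem_insert_self _ _⟩, ?_, ?_⟩, Finset.mem_insert_self _ _,
    Finset.insert_subset_insert f hsub⟩
  · intro z
    rw [hins, hce]
    by_cases hza : z = a
    · subst hza; rw [hinca]; simp
    · by_cases hzb : z = b
      · subst hzb; rw [hincb]; simp [hza]
      · rcases hint z hza hzb with h | h <;> rw [h] <;> simp [hza, hzb]
  · intro x y hx hy
    exact (G.conn_symm (hconn_a x hx)).trans (hconn_a y hy)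

theorem cycle_dual {T : Finset G.E} (hT : G.IsSpanningTree T) {f : G.E}
    {C : Finset G.E} (hC : G.IsCycleOf T f C) {h : G.E} (hh : h ∈ C) (hhf : h ≠ f)
    {u v : G.V} (hfe : G.ends f = s(u, v)) : ¬ G.ConnectsVia (T.erase h) u v := by
  intro hconn
  obtain ⟨x, y, hxy⟩ := G.ends_rep h
  have hxy' : G.ConnectsVia (C.erase h) x y := G.cycle_erase_conn hC.1 hh hxy
  have hsub : C.erase h ⊆ insert f (T.erase h) := by
    intro z hz
    obtain ⟨hzh, hzC⟩ := Finset.mem_erase.1 hz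
    rcases Finset.mem_insert.1 (hC.2.2 hzC) with rfl | hzT
    · exact Finset.mem_insert_self _ _
    · exact Finset.mem_insert_of_mem (Finset.mem_erase.2 ⟨hzh, hzT⟩)
  have hTh : h ∈ T := by
    rcases Finset.mem_insert.1 (hC.2.2 hh) with rfl | hzT
    · exact absurd rfl hhf
    · exact hzT
  exact G.spanning_erase_not_conn hT hTh hxy
    (G.conn_elim_insert hfe hconn (G.conn_mono hsub hxy'))

end UncGraph
namespace UncGraph

variable {G : UncGraph}

/-! #### Interval facts -/

theorem mem_I_bounds {e : G.E} {x : ℝ} (h : x ∈ G.I e) : G.L e ≤ x ∧ x ≤ G.U e := by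
  rcases h with ⟨h1, h2⟩ | ⟨h1, h2⟩
  · subst h2; exact ⟨le_refl _, G.LU e⟩
  · exact ⟨h1.le, h2.le⟩

theorem mem_I_triv {e : G.E} {x : ℝ} (h : x ∈ G.I e) (ht : G.TrivialEdge e) : x = G.L e := by
  rcases h with ⟨h1, h2⟩ | ⟨h1, h2⟩
  · exact h2
  · exact absurd ht (by unfold TrivialEdge; linarith)

theorem mem_I_nontriv {e : G.E} {x : ℝ} (h : x ∈ G.I e) (ht : ¬ G.TrivialEdge e) :
    G.L e < x ∧ x < G.U e := by
  rcases h with ⟨h1, h2⟩ | ⟨h1, h2⟩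
  · exact absurd h1 ht
  · exact ⟨h1, h2⟩

theorem pw_mem_I (e : G.E) : G.pw e ∈ G.I e := G.pw_mem e

theorem nontriv_LU {e : G.E} (h : ¬ G.TrivialEdge e) : G.L e < G.U e :=
  lt_of_le_of_ne (G.LU e) h

/-! #### Real limit helpers -/

theorem le_limit_aux {δ k ε₀ : ℝ} (hε₀ : 0 < ε₀)
    (h : ∀ ε, 0 < ε → ε < ε₀ → δ ≤ k * ε) : δ ≤ 0 := by
  by_contra hc
  push_neg at hc
  set ε := min (ε₀ / 2) (δ / (2 * (|k| + 1))) with hε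
  have habs : (0:ℝ) ≤ |k| := abs_nonneg k
  have h1 : 0 < ε := lt_min (by linarith) (by positivity)
  have h2 : ε < ε₀ := lt_of_le_of_lt (min_le_left _ _) (by linarith)
  have h3 := h ε h1 h2
  have h4 : k * ε ≤ |k| * ε := mul_le_mul_of_nonneg_right (le_abs_self k) h1.le
  have h5 : |k| * ε ≤ |k| * (δ / (2 * (|k| + 1))) :=
    mul_le_mul_of_nonneg_left (min_le_right _ _) habs
  have h6 : |k| * (δ / (2 * (|k| + 1))) < δ := by
    have hpos : (0:ℝ) < 2 * (|k| + 1) := by positivity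
    have hq : 0 < δ / (2 * (|k| + 1)) := by positivity
    have hqq : δ / (2 * (|k| + 1)) * (2 * (|k| + 1)) = δ := div_mul_cancel₀ _ (ne_of_gt hpos)
    nlinarith
  linarith

theorem le_of_small_add {A B ε₀ : ℝ} (hε₀ : 0 < ε₀)
    (h : ∀ ε, 0 < ε → ε < ε₀ → A ≤ B + ε) : A ≤ B := by
  have := le_limit_aux (δ := A - B) (k := 1) hε₀ (fun ε h1 h2 => by
    have := h ε h1 h2; linarith)
  linarith

theorem affine_corner {Lo Hi : ℝ} (hLU : Lo < Hi) {a b c d : ℝ}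
    (h : ∀ t, Lo < t → t < Hi → a + b * t ≤ c + d * t) :
    (a + b * Lo ≤ c + d * Lo) ∧ (a + b * Hi ≤ c + d * Hi) := by
  constructor
  · have := le_limit_aux (δ := (a + b * Lo) - (c + d * Lo)) (k := d - b)
      (ε₀ := Hi - Lo) (by linarith) (fun ε h1 h2 => by
        have := h (Lo + ε) (by linarith) (by linarith); nlinarith)
    linarith
  · have := le_limit_aux (δ := (a + b * Hi) - (c + d * Hi)) (k := b - d)
      (ε₀ := Hi - Lo) (by linarith) (fun ε h1 h2 => by
        have := h (Hi - ε) (by linarith) (by linarith); nlinarith)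
    linarith

/-! #### Exchange theorem: the cycle condition implies being an MST -/

theorem mst_of_cycle_cond {T : Finset G.E} (hT : G.IsSpanningTree T) (wf : G.E → ℝ)
    (hcond : ∀ f ∉ T, ∀ C, G.IsCycleOf T f C → ∀ e ∈ C, e ≠ f → wf e ≤ wf f) :
    G.IsMST wf T := by
  refine ⟨hT, ?_⟩
  suffices h : ∀ n (T' : Finset G.E), G.IsSpanningTree T' → (T' \ T).card ≤ n →
      ∑ e ∈ T, wf e ≤ ∑ e ∈ T', wf e by
    intro T' hT'
    exact h _ T' hT' le_rfl
  intro n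
  induction n with
  | zero =>
    intro T' hT' hcard
    have hsub : T' ⊆ T := by
      rw [Nat.le_zero, Finset.card_eq_zero, Finset.sdiff_eq_empty_iff_subset] at hcard
      exact hcard
    rw [G.spanning_eq_of_subset hT hT' hsub]
  | succ n ih =>
    intro T' hT' hcard
    by_cases h0 : (T' \ T).card ≤ n
    · exact ih T' hT' h0
    have hne : (T' \ T).Nonempty := by
      rw [← Finset.card_pos]; omega
    obtain ⟨f, hf⟩ := hne
    obtain ⟨hfT', hfT⟩ := Finset.mem_sdiff.1 hf
    obtain ⟨u, v, hfe⟩ := G.ends_rep f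
    have huv : u ≠ v := G.spanning_no_loop hT' hfT' hfe
    obtain ⟨P, hP⟩ := G.pathex (hT.1 u v) huv
    have hfP : f ∉ P := fun h => hfT (hP.1 h)
    have hcyc := G.goodpath_cycle hP hfT hfe huv
    have hsep : ¬ G.ConnectsVia (T'.erase f) u v := G.spanning_erase_not_conn hT' hfT' hfe
    obtain ⟨h, hhP, x, y, hxy, hPx, hPy⟩ :=
      G.walk_cross hP.2.1 (fun z => G.ConnectsVia (T'.erase f) u z) Relation.ReflTransGen.refl hsep
    have hhf : h ≠ f := fun hEq => hfP (hEq ▸ hhP)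
    have hhT' : h ∉ T' := by
      intro hmem
      exact hPy (hPx.tail ⟨h, Finset.mem_erase.2 ⟨hhf, hmem⟩, hxy⟩)
    have hsepxy : ¬ G.ConnectsVia (T'.erase f) x y := fun hx => hPy (hPx.trans hx)
    have hsp2 := G.swap_spanning hT' hfT' hfe hxy hsepxy
    have hwle : wf h ≤ wf f :=
      hcond f hfT _ hcyc h (Finset.mem_insert_of_mem hhP) hhf
    have hhT : h ∈ T := hP.1 hhP
    have hdiff : (insert h (T'.erase f)) \ T = (T' \ T).erase f := by
      ext z
      simp only [Finset.mem_sdiff, Finset.mem_insert, Finset.mem_erase]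
      constructor
      · rintro ⟨rfl | ⟨hzf, hzT'⟩, hzT⟩
        · exact absurd hhT hzT
        · exact ⟨hzf, hzT', hzT⟩
      · rintro ⟨hzf, hzT', hzT⟩
        exact ⟨Or.inr ⟨hzf, hzT'⟩, hzT⟩
    have hcard2 : ((insert h (T'.erase f)) \ T).card ≤ n := by
      rw [hdiff, Finset.card_erase_of_mem hf]
      omega
    have hle := ih _ hsp2 hcard2
    rw [G.sum_swap wf hfT' hhT'] at hle
    linarith

/-! #### Limit tree inequalities -/

theorem lower_weak {T : Finset G.E} (hlow : G.IsLowerLimitTree T) {x h : G.E}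
    (hx : x ∈ T) (hh : h ∉ T) (hsp : G.IsSpanningTree (insert h (T.erase x))) :
    G.L x ≤ G.L h ∧ (G.TrivialEdge h → ¬ G.TrivialEdge x → G.L x < G.L h) := by
  obtain ⟨ε₀, hε₀, hmst⟩ := hlow
  have key : ∀ ε, 0 < ε → ε < ε₀ → G.lowerWeight ε x ≤ G.lowerWeight ε h :=
    fun ε h1 h2 => G.mst_swap_le (hmst ε h1 h2) hx hh hsp
  by_cases htx : G.TrivialEdge x <;> by_cases hth : G.TrivialEdge h
  · have := key (ε₀ / 2) (by linarith) (by linarith)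
    rw [lowerWeight, lowerWeight, if_pos (show G.L x = G.U x from htx), if_pos (show G.L h = G.U h from hth)] at this
    exact ⟨this, fun _ h2 => absurd htx h2⟩
  · refine ⟨?_, fun h1 _ => absurd h1 hth⟩
    apply le_of_small_add hε₀
    intro ε h1 h2
    have := key ε h1 h2
    rw [lowerWeight, lowerWeight, if_pos (show G.L x = G.U x from htx), if_neg (show ¬ G.L h = G.U h from hth)] at this
    linarith
  · have := key (ε₀ / 2) (by linarith) (by linarith)
    rw [lowerWeight, lowerWeight, if_neg (show ¬ G.L x = G.U x from htx), if_pos (show G.L h = G.U h from hth)] at this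
    constructor
    · linarith
    · intro _ _; linarith
  · have := key (ε₀ / 2) (by linarith) (by linarith)
    rw [lowerWeight, lowerWeight, if_neg (show ¬ G.L x = G.U x from htx), if_neg (show ¬ G.L h = G.U h from hth)] at this
    exact ⟨by linarith, fun h1 _ => absurd h1 hth⟩

theorem upper_weak {T : Finset G.E} (hup : G.IsUpperLimitTree T) {x h : G.E}
    (hx : x ∈ T) (hh : h ∉ T) (hsp : G.IsSpanningTree (insert h (T.erase x))) :
    G.U x ≤ G.U h ∧ (G.TrivialEdge x → ¬ G.TrivialEdge h → G.U x < G.U h) := by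
  obtain ⟨ε₀, hε₀, hmst⟩ := hup
  have key : ∀ ε, 0 < ε → ε < ε₀ → G.upperWeight ε x ≤ G.upperWeight ε h :=
    fun ε h1 h2 => G.mst_swap_le (hmst ε h1 h2) hx hh hsp
  by_cases htx : G.TrivialEdge x <;> by_cases hth : G.TrivialEdge h
  · have := key (ε₀ / 2) (by linarith) (by linarith)
    rw [upperWeight, upperWeight, if_pos (show G.L x = G.U x from htx), if_pos (show G.L h = G.U h from hth)] at this
    rw [show G.U x = G.L x from htx.symm, show G.U h = G.L h from hth.symm]
    exact ⟨this, fun _ h2 => absurd hth h2⟩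
  · have := key (ε₀ / 2) (by linarith) (by linarith)
    rw [upperWeight, upperWeight, if_pos (show G.L x = G.U x from htx), if_neg (show ¬ G.L h = G.U h from hth)] at this
    rw [show G.U x = G.L x from htx.symm]
    exact ⟨by linarith, fun _ _ => by linarith⟩
  · refine ⟨?_, fun h1 _ => absurd h1 htx⟩
    rw [show G.U h = G.L h from hth.symm]
    apply le_of_small_add hε₀
    intro ε h1 h2
    have := key ε h1 h2
    rw [upperWeight, upperWeight, if_neg (show ¬ G.L x = G.U x from htx), if_pos (show G.L h = G.U h from hth)] at this
    linarith
  · have := key (ε₀ / 2) (by linarith) (by linarith)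
    rw [upperWeight, upperWeight, if_neg (show ¬ G.L x = G.U x from htx), if_neg (show ¬ G.L h = G.U h from hth)] at this
    exact ⟨by linarith, fun h1 _ => absurd h1 htx⟩

theorem swap_eq_weight_not_unique {T : Finset G.E} {x h : G.E}
    (hx : x ∈ T) (hh : h ∉ T) (hsp : G.IsSpanningTree (insert h (T.erase x)))
    {wfam : ℝ → G.E → ℝ} {ε₀ : ℝ} (hε₀ : 0 < ε₀)
    (hmst : ∀ ε, 0 < ε → ε < ε₀ → G.IsMST (wfam ε) T)
    (heq : ∀ ε, wfam ε x = wfam ε h)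
    (huniq : ∀ T'', (∃ ε₁ > (0:ℝ), ∀ ε, 0 < ε → ε < ε₁ → G.IsMST (wfam ε) T'') → T'' = T) :
    False := by
  have hS : insert h (T.erase x) = T := by
    apply huniq
    refine ⟨ε₀, hε₀, fun ε h1 h2 => ⟨hsp, fun T'' hT'' => ?_⟩⟩
    rw [G.sum_swap (wfam ε) hx hh, ← heq ε]
    have := (hmst ε h1 h2).2 T'' hT''
    linarith
  exact hh (hS ▸ Finset.mem_insert_self h (T.erase x))

theorem lower_strict {T : Finset G.E} (hU : G.UniqueLimitTrees T) {x h : G.E}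
    (hx : x ∈ T) (hh : h ∉ T) (hsp : G.IsSpanningTree (insert h (T.erase x))) :
    G.L x ≤ G.L h ∧ ((¬ G.TrivialEdge x ∨ G.TrivialEdge h) → G.L x < G.L h) := by
  obtain ⟨ε₀, hε₀, hmst⟩ := hU.1
  have hweak := G.lower_weak ⟨ε₀, hε₀, hmst⟩ hx hh hsp
  refine ⟨hweak.1, fun hcase => ?_⟩
  rcases lt_or_eq_of_le hweak.1 with h' | h'
  · exact h'
  exfalso
  by_cases htx : G.TrivialEdge x <;> by_cases hth : G.TrivialEdge h
  · exact G.swap_eq_weight_not_unique hx hh hsp hε₀ hmst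
      (fun ε => by rw [lowerWeight, lowerWeight, if_pos (show G.L x = G.U x from htx), if_pos (show G.L h = G.U h from hth)]; exact h')
      (fun T'' hT'' => hU.2.2.1 T'' hT'')
  · rcases hcase with hc | hc
    · exact hc htx
    · exact hth hc
  · have := hweak.2 hth htx; linarith
  · exact G.swap_eq_weight_not_unique hx hh hsp hε₀ hmst
      (fun ε => by rw [lowerWeight, lowerWeight, if_neg (show ¬ G.L x = G.U x from htx), if_neg (show ¬ G.L h = G.U h from hth), h'])
      (fun T'' hT'' => hU.2.2.1 T'' hT'')

theorem upper_strict {T : Finset G.E} (hU : G.UniqueLimitTrees T) {x h : G.E}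
    (hx : x ∈ T) (hh : h ∉ T) (hsp : G.IsSpanningTree (insert h (T.erase x))) :
    G.U x ≤ G.U h ∧ ((G.TrivialEdge x ∨ ¬ G.TrivialEdge h) → G.U x < G.U h) := by
  obtain ⟨ε₀, hε₀, hmst⟩ := hU.2.1
  have hweak := G.upper_weak ⟨ε₀, hε₀, hmst⟩ hx hh hsp
  refine ⟨hweak.1, fun hcase => ?_⟩
  rcases lt_or_eq_of_le hweak.1 with h' | h'
  · exact h'
  exfalso
  by_cases htx : G.TrivialEdge x <;> by_cases hth : G.TrivialEdge h
  · exact G.swap_eq_weight_not_unique hx hh hsp hε₀ hmst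
      (fun ε => by
        rw [upperWeight, upperWeight, if_pos (show G.L x = G.U x from htx), if_pos (show G.L h = G.U h from hth)]
        have h1 : G.L x = G.U x := htx
        have h2 : G.L h = G.U h := hth
        linarith)
      (fun T'' hT'' => hU.2.2.2 T'' hT'')
  · have := hweak.2 htx hth; linarith
  · rcases hcase with hc | hc
    · exact htx hc
    · exact hc hth
  · exact G.swap_eq_weight_not_unique hx hh hsp hε₀ hmst
      (fun ε => by rw [upperWeight, upperWeight, if_neg (show ¬ G.L x = G.U x from htx), if_neg (show ¬ G.L h = G.U h from hth), h'])
      (fun T'' hT'' => hU.2.2.2 T'' hT'')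

end UncGraph
namespace UncGraph

variable {G : UncGraph}

/-! #### Feasibility, mandatory edges, and the two-corner criterion -/

theorem feasible_mono {w : G.E → ℝ} {Q Q' : Finset G.E} (hQQ : Q ⊆ Q')
    (h : G.Feasible w Q) : G.Feasible w Q' := by
  obtain ⟨T₀, hT₀⟩ := h
  exact ⟨T₀, fun wf hwf => hT₀ wf ⟨fun e he => hwf.1 e (hQQ he), hwf.2⟩⟩

theorem not_mandatory_feasible {w : G.E → ℝ} {m : G.E} (h : ¬ G.Mandatory w m) :
    G.Feasible w (Finset.univ.erase m) := by
  unfold Mandatory at h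
  push_neg at h
  obtain ⟨Q, hQ, hm⟩ := h
  exact G.feasible_mono
    (fun z hz => Finset.mem_erase.2 ⟨fun hEq => hm (hEq ▸ hz), Finset.mem_univ z⟩) hQ

theorem sum_update (S : Finset G.E) (p : G.E → ℝ) (m : G.E) (t : ℝ) :
    ∑ e ∈ S, Function.update p m t e
      = ∑ e ∈ S, p e + (if m ∈ S then t - p m else 0) := by
  by_cases hm : m ∈ S
  · rw [if_pos hm, ← Finset.add_sum_erase _ _ hm, ← Finset.add_sum_erase _ (fun e => p e) hm,
      Function.update_self]
    rw [Finset.sum_congr rfl (fun e he => Function.update_of_ne (Finset.mem_erase.1 he).1 t p)]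
    ring
  · rw [if_neg hm,
      Finset.sum_congr rfl (fun e he => Function.update_of_ne (fun hEq : e = m => hm (hEq ▸ he)) t p)]
    ring

theorem mst_exists (wf : G.E → ℝ) {T : Finset G.E} (hT : G.IsSpanningTree T) :
    ∃ T₀, G.IsMST wf T₀ := by
  classical
  obtain ⟨T₀, hT₀mem, hT₀min⟩ := Finset.exists_min_image
    ((Finset.univ : Finset G.E).powerset.filter (fun S => G.IsSpanningTree S))
    (fun S => ∑ e ∈ S, wf e) ⟨T, by simp [hT]⟩
  exact ⟨T₀, (Finset.mem_filter.1 hT₀mem).2, fun S hS => hT₀min S (by simp [hS])⟩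

theorem feasible_corners {m : G.E} (hfe : G.Feasible G.pw (Finset.univ.erase m)) :
    ∃ T₀, G.IsMST (Function.update G.pw m (G.L m)) T₀ ∧
      G.IsMST (Function.update G.pw m (G.U m)) T₀ := by
  obtain ⟨T₀, hver⟩ := hfe
  have hcompat : ∀ t, t ∈ G.I m →
      G.Compatible G.pw (Finset.univ.erase m) (Function.update G.pw m t) := by
    intro t ht
    refine ⟨fun e he => Function.update_of_ne (Finset.mem_erase.1 he).1 _ _, fun e => ?_⟩
    by_cases hem : e = m
    · subst hem; rw [Function.update_self]; exact ht
    · rw [Function.update_of_ne hem]; exact G.pw_mem_I e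
  have hMt : ∀ t, t ∈ G.I m → G.IsMST (Function.update G.pw m t) T₀ :=
    fun t ht => hver _ (hcompat t ht)
  by_cases htriv : G.TrivialEdge m
  · have hUL : G.U m = G.L m := htriv.symm
    have h1 : G.IsMST (Function.update G.pw m (G.L m)) T₀ :=
      hMt _ (Or.inl ⟨htriv, rfl⟩)
    exact ⟨T₀, h1, by rw [hUL]; exact h1⟩
  · have hLU := G.nontriv_LU htriv
    have hmem : ∀ t, G.L m < t → t < G.U m → t ∈ G.I m := fun t h1 h2 => Or.inr ⟨h1, h2⟩
    have hsp : G.IsSpanningTree T₀ :=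
      (hMt _ (hmem ((G.L m + G.U m)/2) (by linarith) (by linarith))).1
    have key : ∀ S, G.IsSpanningTree S →
        (∑ e ∈ T₀, Function.update G.pw m (G.L m) e
          ≤ ∑ e ∈ S, Function.update G.pw m (G.L m) e) ∧
        (∑ e ∈ T₀, Function.update G.pw m (G.U m) e
          ≤ ∑ e ∈ S, Function.update G.pw m (G.U m) e) := by
      intro S hS
      have haff : ∀ t, G.L m < t → t < G.U m →
          (∑ e ∈ T₀, G.pw e - (if m ∈ T₀ then G.pw m else 0))
            + (if m ∈ T₀ then (1:ℝ) else 0) * t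
          ≤ (∑ e ∈ S, G.pw e - (if m ∈ S then G.pw m else 0))
            + (if m ∈ S then (1:ℝ) else 0) * t := by
        intro t h1 h2
        have hle := (hMt t (hmem t h1 h2)).2 S hS
        rw [G.sum_update T₀ G.pw m t, G.sum_update S G.pw m t] at hle
        split_ifs at hle ⊢ <;> linarith
      have hcor := affine_corner hLU haff
      constructor
      · have h1 := hcor.1
        rw [G.sum_update T₀ G.pw m (G.L m), G.sum_update S G.pw m (G.L m)]
        split_ifs at h1 ⊢ <;> linarith
      · have h2 := hcor.2
        rw [G.sum_update T₀ G.pw m (G.U m), G.sum_update S G.pw m (G.U m)]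
        split_ifs at h2 ⊢ <;> linarith
    exact ⟨T₀, ⟨hsp, fun S hS => (key S hS).1⟩, ⟨hsp, fun S hS => (key S hS).2⟩⟩

theorem pmf_corners (hPMF : G.PredMandatoryFree) (m : G.E) :
    ∃ T₀, G.IsMST (Function.update G.pw m (G.L m)) T₀ ∧
      G.IsMST (Function.update G.pw m (G.U m)) T₀ :=
  G.feasible_corners (G.not_mandatory_feasible (hPMF m))

end UncGraph
namespace UncGraph

variable {G : UncGraph}

theorem incut_of_rep {T : Finset G.E} {e g : G.E} {u v : G.V} (hg : G.ends g = s(u, v))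
    (hsep : ¬ G.ConnectsVia (T.erase e) u v) : G.InCut T e g := by
  intro x y hxy
  rw [hg] at hxy
  rcases Sym2.eq_iff.1 hxy with ⟨rfl, rfl⟩ | ⟨rfl, rfl⟩
  · exact hsep
  · exact fun hc => hsep (G.conn_symm hc)

theorem mem_tree_of_cycle {T : Finset G.E} {f : G.E} {C : Finset G.E}
    (hC : G.IsCycleOf T f C) {e : G.E} (he : e ∈ C) (hef : e ≠ f) : e ∈ T := by
  rcases Finset.mem_insert.1 (hC.2.2 he) with rfl | h
  · exact absurd rfl hef
  · exact h

/-- Direction (⇐): the cycle conditions imply prediction mandatory freeness. -/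
theorem pmf_of_conditions {T : Finset G.E} (hTsp : G.IsSpanningTree T)
    (hcond : ∀ f, f ∉ T → ∀ C, G.IsCycleOf T f C → ∀ e ∈ C, e ≠ f →
      G.U e ≤ G.pw f ∧ G.pw e ≤ G.L f) :
    G.PredMandatoryFree := by
  intro m hman
  have hfeas : G.Feasible G.pw (Finset.univ.erase m) := by
    refine ⟨T, fun wf hwf => ?_⟩
    have hwfm : wf m ∈ G.I m := hwf.2 m
    have hwfe : ∀ e, e ≠ m → wf e = G.pw e := fun e he =>
      hwf.1 e (Finset.mem_erase.2 ⟨he, Finset.mem_univ e⟩)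
    apply G.mst_of_cycle_cond hTsp
    intro f hf C hC e heC hef
    have heT : e ∈ T := G.mem_tree_of_cycle hC heC hef
    obtain ⟨h1, h2⟩ := hcond f hf C hC e heC hef
    have hbm := G.mem_I_bounds hwfm
    have hpwf := G.mem_I_bounds (G.pw_mem_I f)
    have hpwe := G.mem_I_bounds (G.pw_mem_I e)
    by_cases hfm : f = m
    · have hem : e ≠ m := fun h => hef (h.trans hfm.symm)
      rw [hwfe e hem]
      calc G.pw e ≤ G.L f := h2
        _ ≤ wf f := (G.mem_I_bounds (hwf.2 f)).1
    · rw [hwfe f hfm]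
      calc wf e ≤ G.U e := (G.mem_I_bounds (hwf.2 e)).2
        _ ≤ G.pw f := h1
  have := hman _ hfeas
  exact (Finset.mem_erase.1 this).1 rfl

/-- Goal 1 machinery: no violation `pw f < U e` on a cycle. -/
theorem goal1 {T : Finset G.E} (hTsp : G.IsSpanningTree T)
    (hlow : G.IsLowerLimitTree T) (hup : G.IsUpperLimitTree T)
    (hPMF : G.PredMandatoryFree) {f : G.E} (hf : f ∉ T) (hntf : ¬ G.TrivialEdge f)
    {C : Finset G.E} (hC : G.IsCycleOf T f C) {u v : G.V} (hfe : G.ends f = s(u, v))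
    (hgoal : ∃ e ∈ C, e ≠ f ∧ G.pw f < G.U e) : False := by
  classical
  have hLfpwf : G.L f < G.pw f := (G.mem_I_nontriv (G.pw_mem_I f) hntf).1
  set Vf := C.filter (fun h => h ≠ f ∧ G.pw f < G.U h) with hVf
  have hVne : Vf.Nonempty := by
    obtain ⟨e, he, h1, h2⟩ := hgoal
    exact ⟨e, by simp [hVf, he, h1, h2]⟩
  obtain ⟨e₁, he₁V, hmax⟩ := Finset.exists_max_image Vf (fun h => G.U h) hVne
  have he₁V' := Finset.mem_filter.1 he₁V
  have he₁C : e₁ ∈ C := he₁V'.1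
  have he₁f : e₁ ≠ f := he₁V'.2.1
  have he₁U : G.pw f < G.U e₁ := he₁V'.2.2
  have he₁T : e₁ ∈ T := G.mem_tree_of_cycle hC he₁C he₁f
  obtain ⟨a₁, b₁, he₁e⟩ := G.ends_rep e₁
  have hab : a₁ ≠ b₁ := G.spanning_no_loop hTsp he₁T he₁e
  have hsepf : ¬ G.ConnectsVia (T.erase e₁) u v := G.cycle_dual hTsp hC he₁C he₁f hfe
  have hnt₁ : ¬ G.TrivialEdge e₁ := by
    intro ht
    have hsw := G.swap_spanning hTsp he₁T he₁e hfe hsepf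
    have hlw := (G.lower_weak hlow he₁T hf hsw).1
    have hUL : G.U e₁ = G.L e₁ := ht.symm
    linarith
  obtain ⟨T₀, hML, hMU⟩ := G.pmf_corners hPMF e₁
  have he₁T₀ : e₁ ∈ T₀ := by
    by_contra he₁T₀
    obtain ⟨Ps, hPs⟩ := G.pathex (hML.1.1 a₁ b₁) hab
    have hsepT : ¬ G.ConnectsVia (T.erase e₁) a₁ b₁ :=
      G.spanning_erase_not_conn hTsp he₁T he₁e
    obtain ⟨h, hhP, x, y, hxy, hPx, hPy⟩ := G.walk_cross hPs.2.1
      (fun z => G.ConnectsVia (T.erase e₁) a₁ z) Relation.ReflTransGen.refl hsepT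
    have hhe₁ : h ≠ e₁ := fun hEq => he₁T₀ (hEq ▸ hPs.1 hhP)
    have hhT : h ∉ T := fun hmem =>
      hPy (hPx.tail ⟨h, Finset.mem_erase.2 ⟨hhe₁, hmem⟩, hxy⟩)
    have hsepxy : ¬ G.ConnectsVia (T.erase e₁) x y := fun hc => hPy (hPx.trans hc)
    have hswTh := G.swap_spanning hTsp he₁T he₁e hxy hsepxy
    have hlw := G.lower_weak hlow he₁T hhT hswTh
    have hLpwh : G.L e₁ < G.pw h := by
      by_cases hth : G.TrivialEdge h
      · have h1 := hlw.2 hth hnt₁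
        have h2 := G.mem_I_triv (G.pw_mem_I h) hth
        linarith
      · have h1 := (G.mem_I_nontriv (G.pw_mem_I h) hth).1
        linarith [hlw.1]
    have hsw₀ := G.swap_spanning hML.1 (hPs.1 hhP) hxy he₁e
      (G.path_dual hML.1 hPs hhP)
    have hle := G.mst_swap_le hML (hPs.1 hhP) he₁T₀ hsw₀
    rw [Function.update_of_ne hhe₁, Function.update_self] at hle
    linarith
  have hCconn := G.cycle_erase_conn hC.1 he₁C he₁e
  have hsep₀ : ¬ G.ConnectsVia (T₀.erase e₁) a₁ b₁ :=
    G.spanning_erase_not_conn hMU.1 he₁T₀ he₁e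
  obtain ⟨h, hhC, x, y, hxy, hPx, hPy⟩ := G.walk_cross hCconn
    (fun z => G.ConnectsVia (T₀.erase e₁) a₁ z) Relation.ReflTransGen.refl hsep₀
  have hhC' : h ∈ C := Finset.mem_of_mem_erase hhC
  have hhe₁ : h ≠ e₁ := (Finset.mem_erase.1 hhC).1
  have hhT₀ : h ∉ T₀ := fun hmem =>
    hPy (hPx.tail ⟨h, Finset.mem_erase.2 ⟨hhe₁, hmem⟩, hxy⟩)
  have hswap := G.swap_spanning hMU.1 he₁T₀ he₁e hxy (fun hc => hPy (hPx.trans hc))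
  have hle := G.mst_swap_le hMU he₁T₀ hhT₀ hswap
  rw [Function.update_self, Function.update_of_ne (fun hEq : h = e₁ => hhe₁ hEq)] at hle
  by_cases hhf : h = f
  · subst hhf; linarith
  · have hhT : h ∈ T := G.mem_tree_of_cycle hC hhC' hhf
    by_cases hth : G.TrivialEdge h
    · have hseph : ¬ G.ConnectsVia (T.erase h) u v := G.cycle_dual hTsp hC hhC' hhf hfe
      have hsw := G.swap_spanning hTsp hhT hxy hfe hseph
      have hlw := (G.lower_weak hlow hhT hf hsw).1
      have h2 := G.mem_I_triv (G.pw_mem_I h) hth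
      linarith
    · have hmem : h ∈ Vf := Finset.mem_filter.2 ⟨hhC', hhf, by
        have := (G.mem_I_nontriv (G.pw_mem_I h) hth).2
        linarith⟩
      have := hmax h hmem
      have h2 := (G.mem_I_nontriv (G.pw_mem_I h) hth).2
      linarith

/-- Goal 2 machinery (cut form): no violation `L g < pw e` across the cut of a tree edge. -/
theorem goal2 {T : Finset G.E} (hTsp : G.IsSpanningTree T)
    (hlow : G.IsLowerLimitTree T) (hup : G.IsUpperLimitTree T)
    (hPMF : G.PredMandatoryFree) {e : G.E} (heT : e ∈ T) (hnte : ¬ G.TrivialEdge e)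
    {a b : G.V} (hee : G.ends e = s(a, b))
    (hgoal : ∃ g, g ∉ T ∧ G.InCut T e g ∧ G.L g < G.pw e) : False := by
  classical
  have hpweUe := G.mem_I_nontriv (G.pw_mem_I e) hnte
  set VS := Finset.univ.filter (fun g => g ∉ T ∧ G.InCut T e g ∧ G.L g < G.pw e) with hVS
  have hVne : VS.Nonempty := by
    obtain ⟨g, h1, h2, h3⟩ := hgoal
    exact ⟨g, by simp [hVS, h1, h2, h3]⟩
  obtain ⟨g₁, hg₁V, hmin⟩ := Finset.exists_min_image VS (fun g => G.L g) hVne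
  have hg₁V' := Finset.mem_filter.1 hg₁V
  obtain ⟨hg₁T, hg₁cut, hg₁L⟩ := hg₁V'.2
  obtain ⟨u₁, v₁, hg₁e⟩ := G.ends_rep g₁
  have hsep₁ : ¬ G.ConnectsVia (T.erase e) u₁ v₁ := hg₁cut u₁ v₁ hg₁e
  have huv₁ : u₁ ≠ v₁ := fun hEq => hsep₁ (hEq ▸ Relation.ReflTransGen.refl)
  have hswap₁ := G.swap_spanning hTsp heT hee hg₁e hsep₁
  have hnt₁ : ¬ G.TrivialEdge g₁ := by
    intro ht
    have hup1 := (G.upper_weak hup heT hg₁T hswap₁).1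
    have hUL : G.U g₁ = G.L g₁ := ht.symm
    linarith [hpweUe.2]
  obtain ⟨T₀, hML, hMU⟩ := G.pmf_corners hPMF g₁
  have hg₁T₀ : g₁ ∉ T₀ := by
    intro hg₁T₀
    obtain ⟨P, hP⟩ := G.pathex (hTsp.1 u₁ v₁) huv₁
    have hPsmall : ∀ h ∈ P, G.pw h < G.U g₁ := by
      intro h hh
      have hhT : h ∈ T := hP.1 hh
      have hdual : ¬ G.ConnectsVia (T.erase h) u₁ v₁ := G.path_dual hTsp hP hh
      obtain ⟨x, y, hxy⟩ := G.ends_rep h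
      have hsw := G.swap_spanning hTsp hhT hxy hg₁e hdual
      have hupw := G.upper_weak hup hhT hg₁T hsw
      by_cases hth : G.TrivialEdge h
      · have h1 := hupw.2 hth hnt₁
        have h2 := G.mem_I_triv (G.pw_mem_I h) hth
        have h3 : G.L h = G.U h := hth
        linarith
      · have h1 := (G.mem_I_nontriv (G.pw_mem_I h) hth).2
        linarith [hupw.1]
    have hsep₀ := G.spanning_erase_not_conn hMU.1 hg₁T₀ hg₁e
    obtain ⟨h, hhP, x, y, hxy, hPx, hPy⟩ := G.walk_cross hP.2.1
      (fun z => G.ConnectsVia (T₀.erase g₁) u₁ z) Relation.ReflTransGen.refl hsep₀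
    have hhg₁ : h ≠ g₁ := fun hEq => hg₁T (hEq ▸ hP.1 hhP)
    have hhT₀ : h ∉ T₀ := fun hmem =>
      hPy (hPx.tail ⟨h, Finset.mem_erase.2 ⟨hhg₁, hmem⟩, hxy⟩)
    have hsw₀ := G.swap_spanning hMU.1 hg₁T₀ hg₁e hxy (fun hc => hPy (hPx.trans hc))
    have hle := G.mst_swap_le hMU hg₁T₀ hhT₀ hsw₀
    rw [Function.update_self, Function.update_of_ne hhg₁] at hle
    exact absurd hle (not_le.2 (hPsmall h hhP))
  obtain ⟨P', hP'⟩ := G.pathex (hML.1.1 u₁ v₁) huv₁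
  obtain ⟨h, hhP', x, y, hxy, hPx, hPy⟩ := G.walk_cross hP'.2.1
    (fun z => G.ConnectsVia (T.erase e) u₁ z) Relation.ReflTransGen.refl hsep₁
  have hhT₀ : h ∈ T₀ := hP'.1 hhP'
  have hhg₁ : h ≠ g₁ := fun hEq => hg₁T₀ (hEq ▸ hhT₀)
  have hdual' : ¬ G.ConnectsVia (T₀.erase h) u₁ v₁ := G.path_dual hML.1 hP' hhP'
  have hsw' := G.swap_spanning hML.1 hhT₀ hxy hg₁e hdual'
  have hle := G.mst_swap_le hML hhT₀ hg₁T₀ hsw'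
  rw [Function.update_of_ne hhg₁, Function.update_self] at hle
  by_cases hhe : h = e
  · subst hhe; linarith
  · have hsepxy : ¬ G.ConnectsVia (T.erase e) x y := fun hc => hPy (hPx.trans hc)
    have hhT : h ∉ T := fun hmem =>
      hPy (hPx.tail ⟨h, Finset.mem_erase.2 ⟨hhe, hmem⟩, hxy⟩)
    by_cases hth : G.TrivialEdge h
    · have hsw := G.swap_spanning hTsp heT hee hxy hsepxy
      have hupw := (G.upper_weak hup heT hhT hsw).1
      have h2 := G.mem_I_triv (G.pw_mem_I h) hth
      have h3 : G.L h = G.U h := hth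
      linarith [hpweUe.2]
    · have hmem : h ∈ VS := Finset.mem_filter.2 ⟨Finset.mem_univ h, hhT,
        G.incut_of_rep hxy hsepxy, by
          have := (G.mem_I_nontriv (G.pw_mem_I h) hth).1
          linarith⟩
      have := hmin h hmem
      have h2 := (G.mem_I_nontriv (G.pw_mem_I h) hth).1
      linarith

/-- Direction (⇒): prediction mandatory freeness implies the cycle conditions. -/
theorem conditions_of_pmf {T : Finset G.E}
    (hlow : G.IsLowerLimitTree T) (hup : G.IsUpperLimitTree T)
    (hPMF : G.PredMandatoryFree) :
    ∀ f, f ∉ T → ∀ C, G.IsCycleOf T f C → ∀ e ∈ C, e ≠ f →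
      G.U e ≤ G.pw f ∧ G.pw e ≤ G.L f := by
  obtain ⟨ε₀, hε₀, hmst⟩ := hlow
  have hTsp : G.IsSpanningTree T := (hmst (ε₀/2) (by linarith) (by linarith)).1
  have hlow' : G.IsLowerLimitTree T := ⟨ε₀, hε₀, hmst⟩
  intro f hf C hC e heC hef
  have heT : e ∈ T := G.mem_tree_of_cycle hC heC hef
  obtain ⟨u, v, hfe⟩ := G.ends_rep f
  obtain ⟨a, b, hee⟩ := G.ends_rep e
  have hsepf : ¬ G.ConnectsVia (T.erase e) u v := G.cycle_dual hTsp hC heC hef hfe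
  have hswap := G.swap_spanning hTsp heT hee hfe hsepf
  have hpwe := G.mem_I_bounds (G.pw_mem_I e)
  have hpwf := G.mem_I_bounds (G.pw_mem_I f)
  by_cases hntf : G.TrivialEdge f
  · have hupw := (G.upper_weak hup heT hf hswap).1
    have h1 := G.mem_I_triv (G.pw_mem_I f) hntf
    have h2 : G.L f = G.U f := hntf
    exact ⟨by linarith, by linarith⟩
  · by_cases hnte : G.TrivialEdge e
    · have hlw := (G.lower_weak hlow' heT hf hswap).1
      have h1 := G.mem_I_triv (G.pw_mem_I e) hnte
      have h2 : G.L e = G.U e := hnte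
      have h3 : G.L f < G.pw f := (G.mem_I_nontriv (G.pw_mem_I f) hntf).1
      exact ⟨by linarith, by linarith⟩
    · constructor
      · by_contra hcon
        push_neg at hcon
        exact G.goal1 hTsp hlow' hup hPMF hf hntf hC hfe ⟨e, heC, hef, hcon⟩
      · by_contra hcon
        push_neg at hcon
        exact G.goal2 hTsp hlow' hup hPMF heT hnte hee
          ⟨f, hf, G.incut_of_rep hfe hsepf, hcon⟩

end UncGraph
namespace UncGraph

variable {G : UncGraph}

theorem spanning_of_lower {T : Finset G.E} (h : G.IsLowerLimitTree T) :
    G.IsSpanningTree T := by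
  obtain ⟨ε₀, hε₀, hmst⟩ := h
  exact (hmst (ε₀ / 2) (by linarith) (by linarith)).1

/-- Cut form of the conditions. -/
theorem cut_conditions {T : Finset G.E}
    (hlow : G.IsLowerLimitTree T) (hup : G.IsUpperLimitTree T)
    (hPMF : G.PredMandatoryFree) {e : G.E} (heT : e ∈ T) {g : G.E} (hg : g ∉ T)
    (hcut : G.InCut T e g) : G.U e ≤ G.pw g ∧ G.pw e ≤ G.L g := by
  have hTsp := G.spanning_of_lower hlow
  obtain ⟨u, v, hge⟩ := G.ends_rep g
  have hsep := hcut u v hge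
  have huv : u ≠ v := fun hEq => hsep (hEq ▸ Relation.ReflTransGen.refl)
  obtain ⟨P, hP⟩ := G.pathex (hTsp.1 u v) huv
  have heP : e ∈ P := by
    by_contra heP
    have hss : P ⊆ T.erase e := fun z hz =>
      Finset.mem_erase.2 ⟨fun h => heP (h ▸ hz), hP.1 hz⟩
    exact hsep (G.conn_mono hss hP.2.1)
  have hcyc := G.goodpath_cycle hP hg hge huv
  exact G.conditions_of_pmf hlow hup hPMF g hg _ hcyc e
    (Finset.mem_insert_of_mem heP) (fun h => hg (h ▸ heT))

section Restrict

variable (w : G.E → ℝ) (Q : Finset G.E)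

theorem restrict_L (e : G.E) : (G.restrict w Q).L e = if e ∈ Q then w e else G.L e := rfl

theorem restrict_U (e : G.E) : (G.restrict w Q).U e = if e ∈ Q then w e else G.U e := rfl

theorem restrict_pw (e : G.E) : (G.restrict w Q).pw e = if e ∈ Q then w e else G.pw e := rfl

theorem restrict_triv_of_mem {e : G.E} (he : e ∈ Q) : (G.restrict w Q).TrivialEdge e := by
  show (G.restrict w Q).L e = (G.restrict w Q).U e
  rw [restrict_L, restrict_U, if_pos he, if_pos he]

theorem restrict_triv_iff {e : G.E} (he : e ∉ Q) :
    (G.restrict w Q).TrivialEdge e ↔ G.TrivialEdge e := by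
  show (G.restrict w Q).L e = (G.restrict w Q).U e ↔ _
  rw [restrict_L, restrict_U, if_neg he, if_neg he]
  exact Iff.rfl

theorem restrict_spanning_iff {S : Finset G.E} :
    (G.restrict w Q).IsSpanningTree S ↔ G.IsSpanningTree S := Iff.rfl

theorem restrict_cycleOf_iff {T : Finset G.E} {f : G.E} {C : Finset G.E} :
    (G.restrict w Q).IsCycleOf T f C ↔ G.IsCycleOf T f C := Iff.rfl

theorem restrict_conn_iff {S : Finset G.E} {u v : G.V} :
    (G.restrict w Q).ConnectsVia S u v ↔ G.ConnectsVia S u v := Iff.rfl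

end Restrict

end UncGraph
namespace UncGraph

variable {G : UncGraph}

theorem step2a {w : G.E → ℝ} (hw : G.Valid w) {Q : Finset G.E} {T T' : Finset G.E}
    (hUT : G.UniqueLimitTrees T) (hUT' : (G.restrict w Q).UniqueLimitTrees T')
    {x : G.E} (hxT : x ∈ T) (hxT' : x ∉ T') : x ∈ Q := by
  by_contra hxQ
  have hTsp : G.IsSpanningTree T := G.spanning_of_lower hUT.1
  have hT'sp : G.IsSpanningTree T' := (G.restrict w Q).spanning_of_lower hUT'.1
  obtain ⟨ax, bx, hxe⟩ := G.ends_rep x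
  have hab : ax ≠ bx := G.spanning_no_loop hTsp hxT hxe
  have hsepT : ¬ G.ConnectsVia (T.erase x) ax bx := G.spanning_erase_not_conn hTsp hxT hxe
  obtain ⟨P', hP'⟩ := G.pathex (hT'sp.1 ax bx) hab
  obtain ⟨h, hhP, p, q, hpq, hPp, hPq⟩ := G.walk_cross hP'.2.1
    (fun z => G.ConnectsVia (T.erase x) ax z) Relation.ReflTransGen.refl hsepT
  have hhT' : h ∈ T' := hP'.1 hhP
  have hhx : h ≠ x := fun hEq => hxT' (hEq ▸ hhT')
  have hhT : h ∉ T := fun hmem =>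
    hPq (hPp.tail ⟨h, Finset.mem_erase.2 ⟨hhx, hmem⟩, hpq⟩)
  have hseppq : ¬ G.ConnectsVia (T.erase x) p q := fun hc => hPq (hPp.trans hc)
  have hsw1 := G.swap_spanning hTsp hxT hxe hpq hseppq
  have hsw2 := G.swap_spanning hT'sp hhT' hpq hxe (G.path_dual hT'sp hP' hhP)
  have hGlow := G.lower_strict hUT hxT hhT hsw1
  have hG'low := (G.restrict w Q).lower_strict hUT' hhT' hxT' hsw2
  have hL'x : (G.restrict w Q).L x = G.L x := by rw [restrict_L, if_neg hxQ]
  by_cases hhQ : h ∈ Q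
  · have hL'h : (G.restrict w Q).L h = w h := by rw [restrict_L, if_pos hhQ]
    have hwh := G.mem_I_bounds (hw h)
    have hchain1 : w h ≤ G.L x := by rw [← hL'h, ← hL'x]; exact hG'low.1
    by_cases htx : G.TrivialEdge x
    · have ht'x : (G.restrict w Q).TrivialEdge x := (G.restrict_triv_iff w Q hxQ).2 htx
      have hstr := hG'low.2 (Or.inr ht'x)
      rw [hL'h, hL'x] at hstr
      linarith [hGlow.1]
    · have hstr := hGlow.2 (Or.inl htx)
      linarith [hwh.1]
  · have hL'h : (G.restrict w Q).L h = G.L h := by rw [restrict_L, if_neg hhQ]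
    have hG'1 : G.L h ≤ G.L x := by rw [← hL'h, ← hL'x]; exact hG'low.1
    by_cases htx : G.TrivialEdge x <;> by_cases hth : G.TrivialEdge h
    · have := hGlow.2 (Or.inr hth); linarith
    · have hstr := hG'low.2 (Or.inr ((G.restrict_triv_iff w Q hxQ).2 htx))
      rw [hL'h, hL'x] at hstr
      linarith [hGlow.1]
    · have := hGlow.2 (Or.inl htx); linarith
    · have := hGlow.2 (Or.inl htx); linarith

theorem step2b {w : G.E → ℝ} (hw : G.Valid w) {Q : Finset G.E} {T T' : Finset G.E}
    (hUT : G.UniqueLimitTrees T) (hUT' : (G.restrict w Q).UniqueLimitTrees T')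
    {y : G.E} (hyT' : y ∈ T') (hyT : y ∉ T) : y ∈ Q := by
  by_contra hyQ
  have hTsp : G.IsSpanningTree T := G.spanning_of_lower hUT.1
  have hT'sp : G.IsSpanningTree T' := (G.restrict w Q).spanning_of_lower hUT'.1
  obtain ⟨ay, cy, hye⟩ := G.ends_rep y
  have hab : ay ≠ cy := G.spanning_no_loop hT'sp hyT' hye
  have hsepT' : ¬ G.ConnectsVia (T'.erase y) ay cy := G.spanning_erase_not_conn hT'sp hyT' hye
  obtain ⟨P, hP⟩ := G.pathex (hTsp.1 ay cy) hab
  obtain ⟨h, hhP, p, q, hpq, hPp, hPq⟩ := G.walk_cross hP.2.1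
    (fun z => G.ConnectsVia (T'.erase y) ay z) Relation.ReflTransGen.refl hsepT'
  have hhT : h ∈ T := hP.1 hhP
  have hhy : h ≠ y := fun hEq => hyT (hEq ▸ hhT)
  have hhT' : h ∉ T' := fun hmem =>
    hPq (hPp.tail ⟨h, Finset.mem_erase.2 ⟨hhy, hmem⟩, hpq⟩)
  have hseppq : ¬ G.ConnectsVia (T'.erase y) p q := fun hc => hPq (hPp.trans hc)
  have hsw1 := G.swap_spanning hTsp hhT hpq hye (G.path_dual hTsp hP hhP)
  have hsw2 := G.swap_spanning hT'sp hyT' hye hpq hseppq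
  have hGup := G.upper_strict hUT hhT hyT hsw1
  have hGlow := G.lower_strict hUT hhT hyT hsw1
  have hG'up := (G.restrict w Q).upper_strict hUT' hyT' hhT' hsw2
  have hG'low := (G.restrict w Q).lower_strict hUT' hyT' hhT' hsw2
  have hU'y : (G.restrict w Q).U y = G.U y := by rw [restrict_U, if_neg hyQ]
  have hL'y : (G.restrict w Q).L y = G.L y := by rw [restrict_L, if_neg hyQ]
  by_cases hhQ : h ∈ Q
  · have hU'h : (G.restrict w Q).U h = w h := by rw [restrict_U, if_pos hhQ]
    have hwh := G.mem_I_bounds (hw h)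
    have hchain1 : G.U y ≤ w h := by rw [← hU'y, ← hU'h]; exact hG'up.1
    by_cases hty : G.TrivialEdge y
    · have ht'y : (G.restrict w Q).TrivialEdge y := (G.restrict_triv_iff w Q hyQ).2 hty
      have hstr := hG'up.2 (Or.inl ht'y)
      rw [hU'y, hU'h] at hstr
      linarith [hGup.1]
    · have hstr := hGup.2 (Or.inr hty)
      linarith [hwh.2]
  · have hL'h : (G.restrict w Q).L h = G.L h := by rw [restrict_L, if_neg hhQ]
    have hG'1 : G.L y ≤ G.L h := by rw [← hL'y, ← hL'h]; exact hG'low.1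
    by_cases hty : G.TrivialEdge y <;> by_cases hth : G.TrivialEdge h
    · have := hGlow.2 (Or.inr hty); linarith
    · have := hGlow.2 (Or.inl hth); linarith
    · have hstr := hG'low.2 (Or.inr ((G.restrict_triv_iff w Q hhQ).2 hth))
      rw [hL'y, hL'h] at hstr
      linarith [hGlow.1]
    · have := hGlow.2 (Or.inl hth); linarith

end UncGraph
namespace UncGraph

variable {G : UncGraph}

theorem restrict_conditions {w : G.E → ℝ} (hw : G.Valid w) {Q : Finset G.E}
    {T T' : Finset G.E} (hUT : G.UniqueLimitTrees T) (hPMF : G.PredMandatoryFree)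
    (hUT' : (G.restrict w Q).UniqueLimitTrees T') :
    ∀ f, f ∉ T' → ∀ C, (G.restrict w Q).IsCycleOf T' f C → ∀ e ∈ C, e ≠ f →
      (G.restrict w Q).U e ≤ (G.restrict w Q).pw f ∧
      (G.restrict w Q).pw e ≤ (G.restrict w Q).L f := by
  intro f hf C hC e heC hef
  have hlow := hUT.1
  have hup := hUT.2.1
  have hTsp : G.IsSpanningTree T := G.spanning_of_lower hlow
  have hT'sp : G.IsSpanningTree T' := (G.restrict w Q).spanning_of_lower hUT'.1
  have hCg : G.IsCycleOf T' f C := hC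
  have heT' : e ∈ T' := G.mem_tree_of_cycle hCg heC hef
  obtain ⟨u, v, hfe⟩ := G.ends_rep f
  obtain ⟨a, b, hee⟩ := G.ends_rep e
  have hsep' : ¬ G.ConnectsVia (T'.erase e) u v := G.cycle_dual hT'sp hCg heC hef hfe
  have huv : u ≠ v := fun hEq => hsep' (hEq ▸ Relation.ReflTransGen.refl)
  have hswap' := G.swap_spanning hT'sp heT' hee hfe hsep'
  have hw'up := (G.restrict w Q).upper_weak hUT'.2.1 heT' hf hswap'
  have hw'low := (G.restrict w Q).lower_weak hUT'.1 heT' hf hswap'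
  have hpw'f := (G.restrict w Q).mem_I_bounds ((G.restrict w Q).pw_mem_I f)
  have hpw'e := (G.restrict w Q).mem_I_bounds ((G.restrict w Q).pw_mem_I e)
  by_cases ht'f : (G.restrict w Q).TrivialEdge f
  · have h1 := (G.restrict w Q).mem_I_triv ((G.restrict w Q).pw_mem_I f) ht'f
    have h2 : (G.restrict w Q).L f = (G.restrict w Q).U f := ht'f
    constructor
    · linarith [hw'up.1, hpw'e.1]
    · linarith [hw'up.1, hpw'e.2]
  · by_cases ht'e : (G.restrict w Q).TrivialEdge e
    · have h1 := (G.restrict w Q).mem_I_triv ((G.restrict w Q).pw_mem_I e) ht'e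
      have h2 : (G.restrict w Q).L e = (G.restrict w Q).U e := ht'e
      have h3 := ((G.restrict w Q).mem_I_nontriv ((G.restrict w Q).pw_mem_I f) ht'f).1
      constructor
      · linarith [hw'low.1]
      · linarith [hw'low.1]
    · have hfQ : f ∉ Q := fun h => ht'f (G.restrict_triv_of_mem w Q h)
      have heQ : e ∉ Q := fun h => ht'e (G.restrict_triv_of_mem w Q h)
      have heT : e ∈ T := by
        by_contra heT
        exact heQ (G.step2b hw hUT hUT' heT' heT)
      have hfT : f ∉ T := fun hfT => hfQ (G.step2a hw hUT hUT' hfT hf)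
      have hUe : (G.restrict w Q).U e = G.U e := by exact if_neg heQ
      have hLf : (G.restrict w Q).L f = G.L f := by exact if_neg hfQ
      have hpwf : (G.restrict w Q).pw f = G.pw f := by exact if_neg hfQ
      have hpwe : (G.restrict w Q).pw e = G.pw e := by exact if_neg heQ
      rw [hUe, hLf, hpwf, hpwe]
      by_cases hcross : G.InCut T e f
      · exact G.cut_conditions hlow hup hPMF heT hfT hcross
      · have hconnTuv : G.ConnectsVia (T.erase e) u v := by
          unfold InCut at hcross
          push_neg at hcross
          obtain ⟨u', v', h1, h2⟩ := hcross
          rw [hfe] at h1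
          rcases Sym2.eq_iff.1 h1 with ⟨rfl, rfl⟩ | ⟨rfl, rfl⟩
          · exact h2
          · exact G.conn_symm h2
        constructor
        · -- Goal 1 : U e ≤ pw f
          obtain ⟨P, hP⟩ := G.pathex (hTsp.1 u v) huv
          obtain ⟨x₁, hx₁P, p, q, hpq, hPp, hPq⟩ := G.walk_cross hP.2.1
            (fun z => G.ConnectsVia (T'.erase e) u z) Relation.ReflTransGen.refl hsep'
          have hx₁T : x₁ ∈ T := hP.1 hx₁P
          have hcf := G.cut_conditions hlow hup hPMF hx₁T hfT
            (G.incut_of_rep hfe (G.path_dual hTsp hP hx₁P))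
          by_cases hx₁e : x₁ = e
          · exact hx₁e ▸ hcf.1
          · have hx₁T' : x₁ ∉ T' := fun hmem =>
              hPq (hPp.tail ⟨x₁, Finset.mem_erase.2 ⟨hx₁e, hmem⟩, hpq⟩)
            have hx₁Q : x₁ ∈ Q := G.step2a hw hUT hUT' hx₁T hx₁T'
            have hseppq : ¬ G.ConnectsVia (T'.erase e) p q := fun hc => hPq (hPp.trans hc)
            have hsw := G.swap_spanning hT'sp heT' hee hpq hseppq
            have hu'w := ((G.restrict w Q).upper_weak hUT'.2.1 heT' hx₁T' hsw).1
            have h2 : (G.restrict w Q).U x₁ = w x₁ := by rw [restrict_U, if_pos hx₁Q]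
            rw [hUe, h2] at hu'w
            have h3 := (G.mem_I_bounds (hw x₁)).2
            linarith [hcf.1]
        · -- Goal 2 : pw e ≤ L f
          obtain ⟨P', hP'⟩ := G.pathex (hT'sp.1 u v) huv
          have heP' : e ∈ P' := by
            by_contra heP'
            exact hsep' (G.conn_mono (fun z hz =>
              Finset.mem_erase.2 ⟨fun hEq : z = e => heP' (hEq ▸ hz), hP'.1 hz⟩) hP'.2.1)
          by_cases hex : ∃ y ∈ P'.erase e, ∃ p q, G.ends y = s(p, q) ∧
              ¬ G.ConnectsVia (T.erase e) p q
          · obtain ⟨y, hyPe, p, q, hpq, hsepPQ⟩ := hex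
            have hyP' : y ∈ P' := Finset.mem_of_mem_erase hyPe
            have hye : y ≠ e := (Finset.mem_erase.1 hyPe).1
            have hyT' : y ∈ T' := hP'.1 hyP'
            have hyT : y ∉ T := fun hmem =>
              hsepPQ (G.conn_step (Finset.mem_erase.2 ⟨hye, hmem⟩) hpq)
            have hyQ : y ∈ Q := G.step2b hw hUT hUT' hyT' hyT
            have hcf2 := (G.cut_conditions hlow hup hPMF heT hyT
              (G.incut_of_rep hpq hsepPQ)).2
            have hsw' := G.swap_spanning hT'sp hyT' hpq hfe (G.path_dual hT'sp hP' hyP')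
            have hl'w := ((G.restrict w Q).lower_weak hUT'.1 hyT' hf hsw').1
            have h2 : (G.restrict w Q).L y = w y := by rw [restrict_L, if_pos hyQ]
            rw [h2, hLf] at hl'w
            have h4 := (G.mem_I_bounds (hw y)).1
            linarith
          · push_neg at hex
            exfalso
            have hPe_sub : ∀ {x y : G.V}, G.ConnectsVia (P'.erase e) x y →
                G.ConnectsVia (T.erase e) x y := fun hc => G.conn_transfer hex hc
            rcases hP'.2.2.1 e heP' a b hee with ⟨h1, h2⟩ | ⟨h1, h2⟩
            · exact G.spanning_erase_not_conn hTsp heT hee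
                ((G.conn_symm (hPe_sub h1)).trans
                  (hconnTuv.trans (G.conn_symm (hPe_sub h2))))
            · exact G.spanning_erase_not_conn hTsp heT
                (by rw [hee, Sym2.eq_swap])
                ((G.conn_symm (hPe_sub h1)).trans
                  (hconnTuv.trans (G.conn_symm (hPe_sub h2))))

theorem restrict_pmf {w : G.E → ℝ} (hw : G.Valid w) {Q : Finset G.E}
    {T T' : Finset G.E} (hUT : G.UniqueLimitTrees T) (hPMF : G.PredMandatoryFree)
    (hUT' : (G.restrict w Q).UniqueLimitTrees T') :
    (G.restrict w Q).PredMandatoryFree :=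
  (G.restrict w Q).pmf_of_conditions ((G.restrict w Q).spanning_of_lower hUT'.1)
    (G.restrict_conditions hw hUT hPMF hUT')

end UncGraph
/-- characterization of prediction mandatory free instances:
an instance with unique `T_L = T_U` is prediction mandatory free iff for every
cycle `C` closed by an edge `f ∉ T_L` and every `e ∈ C ∖ {f}` we have
`ŵ_f ≥ U_e` and `ŵ_e ≤ L_f`; moreover a prediction mandatory free instance
remains prediction mandatory free after further queries, as long as the unique
limit trees `T_L = T_U` are maintained. -/
theorem pmf_characterization
    (G : UncGraph) (w : G.E → ℝ) (hw : G.Valid w)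
    (T : Finset G.E) (hT : G.UniqueLimitTrees T) :
    (G.PredMandatoryFree ↔
      ∀ f, f ∉ T → ∀ C, G.IsCycleOf T f C → ∀ e ∈ C, e ≠ f →
        G.U e ≤ G.pw f ∧ G.pw e ≤ G.L f) ∧
    (G.PredMandatoryFree →
      ∀ (Q : Finset G.E) (T' : Finset G.E),
        (G.restrict w Q).UniqueLimitTrees T' →
        (G.restrict w Q).PredMandatoryFree) := by
  constructor
  · constructor
    · intro hPMF
      exact G.conditions_of_pmf hT.1 hT.2.1 hPMF
    · intro hcond
      exact G.pmf_of_conditions (G.spanning_of_lower hT.1) hcond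
  · intro hPMF Q T' hUT'
    exact G.restrict_pmf hw hT hPMF hUT'
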